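/- arXiv:1904.00130 — 2 statements merged into one kernel-verified Lean document; each statement's English description precedes it below -/
import Mathlib

section
/- For every reduced word i ∈ Σ_{n+1} of the longest element of S_{n+1}, there exist words u, v over [n] such that i is 2-move equivalent to the concatenation u (n, n−1, …, 2, 1) v, and there exist words u′, v′ over [n] such that i is 2-move equivalent to u′ (1, 2, …, n−1, n) v′. -/
open scoped Classical

noncomputable section

namespace StringPolytope

/-! ### Words, reduced words, two-moves -/

/-- the simple transposition `s_a = (a, a+1)` acting on `ℕ` (wires are `1, …, n+1`). -/
def sTrans (a : ℕ) : Equiv.Perm ℕ := Equiv.swap a (a + 1)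

/-- product `s_{i₁} ⋯ s_{i_N}` of the simple transpositions of a word. -/
def wordProd (w : List ℕ) : Equiv.Perm ℕ := (w.map sTrans).prod

/-- the longest element `w₀` of the symmetric group on `{1, …, n+1}`,
sending `k ↦ n + 2 - k` there and fixing everything else. -/
def longestPerm (n : ℕ) : Equiv.Perm ℕ :=
  Function.Involutive.toPerm
    (fun k => if 1 ≤ k ∧ k ≤ n + 1 then n + 2 - k else k)
    (by intro k; dsimp only; split_ifs <;> omega)

/-- `w ∈ Σ_{n+1}`: a reduced word of the longest element of `S_{n+1}`,
i.e. a word over `[n] = {1,…,n}` of length `N = n(n+1)/2` whose product is `w₀`. -/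
def IsReduced (n : ℕ) (w : List ℕ) : Prop :=
  w.length = n * (n + 1) / 2 ∧ (∀ a ∈ w, 1 ≤ a ∧ a ≤ n) ∧ wordProd w = longestPerm n

/-- a single 2-move: exchange two adjacent letters `(a, b)` with `|a - b| > 1`. -/
def TwoMoveStep (w w' : List ℕ) : Prop :=
  ∃ u v a b, (a + 1 < b ∨ b + 1 < a) ∧ w = u ++ a :: b :: v ∧ w' = u ++ b :: a :: v

/-- 2-move equivalence of words. -/
def TwoMoveEquiv : List ℕ → List ℕ → Prop := Relation.ReflTransGen TwoMoveStep

/-- `A_n = (1, 2, …, n)`. -/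
def ascWord (n : ℕ) : List ℕ := (List.range n).map (· + 1)

/-- `D_n = (n, n-1, …, 1)`. -/
def descWord (n : ℕ) : List ℕ := (ascWord n).reverse

/-! ### The wiring diagram -/

/-- the letter `i_j` of `w` (1-based index `j`); the node `t_j` lies in column `i_j`. -/
def letterAt (w : List ℕ) (j : ℕ) : ℕ := w.getD (j - 1) 0

/-- `1 ≤ j ≤ N`: `t_j` is an actual node of the diagram. -/
def ValidNode (w : List ℕ) (j : ℕ) : Prop := 1 ≤ j ∧ j ≤ w.length

/-- the column-to-wire assignment just above node `t_j`
(at the top of the diagram, wire `k` is in column `k`). -/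
def stateAbove (w : List ℕ) (j : ℕ) : Equiv.Perm ℕ := wordProd (w.take (j - 1))

/-- the column-to-wire assignment just below node `t_j`. -/
def stateBelow (w : List ℕ) (j : ℕ) : Equiv.Perm ℕ := wordProd (w.take j)

/-- one of the two wires crossing at node `t_j` (the one leaving upward-left). -/
def wireX (w : List ℕ) (j : ℕ) : ℕ := stateAbove w j (letterAt w j)

/-- the other wire crossing at node `t_j` (the one leaving upward-right). -/
def wireY (w : List ℕ) (j : ℕ) : ℕ := stateAbove w j (letterAt w j + 1)

/-- the node `t_j` lies on the wire `ℓ_r`. -/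
def NodeOnWire (w : List ℕ) (j r : ℕ) : Prop := wireX w j = r ∨ wireY w j = r

/-- given one wire `r` at node `t_j`, the other wire crossing there. -/
def otherWire (w : List ℕ) (j r : ℕ) : ℕ := if wireX w j = r then wireY w j else wireX w j

/-- the column of wire `ℓ_r` at the height of node `t_j`. -/
def wireCol (w : List ℕ) (j r : ℕ) : ℕ := (stateBelow w j).symm r

/-- node `t_j` lies strictly below the wire `ℓ_{n+1}`
(which runs from the bottom-left corner to the top-right corner). -/
def BelowWireLast (n : ℕ) (w : List ℕ) (j : ℕ) : Prop :=
  wireCol w j (n + 1) < letterAt w j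

/-- node `t_j` lies strictly above the wire `ℓ_{n+1}`. -/
def AboveWireLast (n : ℕ) (w : List ℕ) (j : ℕ) : Prop :=
  letterAt w j + 1 < wireCol w j (n + 1)

/-- node `t_j` lies strictly below the wire `ℓ_1`
(which runs from the bottom-right corner to the top-left corner). -/
def BelowWireOne (w : List ℕ) (j : ℕ) : Prop :=
  letterAt w j + 1 < wireCol w j 1

/-- node `t_j` lies strictly above the wire `ℓ_1`. -/
def AboveWireOne (w : List ℕ) (j : ℕ) : Prop :=
  wireCol w j 1 < letterAt w j

/-! ### Rigorous (Gleizer–Postnikov) paths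

A path in `G(i, k)` is encoded by `k` together with the list of its switching
nodes, in order of travel.  Wires `ℓ_1, …, ℓ_k` are oriented upward
(decreasing node index) and the remaining wires downward. -/

/-- the (1-based indices of the) nodes lying on wire `ℓ_r`, in order of increasing index. -/
def nodesOn (w : List ℕ) (r : ℕ) : List ℕ :=
  ((List.range w.length).map (· + 1)).filter (fun j => decide (NodeOnWire w j r))

/-- nodes on wire `ℓ_r` strictly between the nodes `t_a` and `t_b`. -/
def segList (w : List ℕ) (r a b : ℕ) : List ℕ :=
  (nodesOn w r).filter (fun j => decide (min a b < j ∧ j < max a b))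

/-- nodes on wire `ℓ_r` strictly below the node `t_a`. -/
def tailList (w : List ℕ) (r a : ℕ) : List ℕ :=
  (nodesOn w r).filter (fun j => decide (a < j))

/-- a forbidden fragment of `G(i, k)`: the path passes straight through node `t_j`
travelling along the wire `ℓ_r`, where the other wire `ℓ_b` crossing there has the same
orientation as `ℓ_r` and (`r < b` if both upward, `r > b` if both downward). -/
def Forbidden (w : List ℕ) (k j r : ℕ) : Prop :=
  (r ≤ k ∧ otherWire w j r ≤ k ∧ r < otherWire w j r) ∨
  (k < r ∧ k < otherWire w j r ∧ otherWire w j r < r)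

/-- travelling in `G(i,k)`: currently on wire `ℓ_r` at node `t_a` (just switched there),
with future switching nodes `ms`; the travel is legal and ends at `L_{k+1}`. -/
def TravelOK (w : List ℕ) (k : ℕ) : ℕ → ℕ → List ℕ → Prop
  | r, a, [] => r = k + 1 ∧ ∀ j ∈ tailList w r a, ¬ Forbidden w k j r
  | r, a, m :: ms =>
      ValidNode w m ∧ NodeOnWire w m r ∧
      (if r ≤ k then m < a else a < m) ∧
      (∀ j ∈ segList w r a m, ¬ Forbidden w k j r) ∧
      TravelOK w k (otherWire w m r) m ms

/-- all nodes visited after the switch at node `t_a` onto wire `ℓ_r`. -/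
def visitTail (w : List ℕ) : ℕ → ℕ → List ℕ → List ℕ
  | r, a, [] => tailList w r a
  | r, a, m :: ms => segList w r a m ++ m :: visitTail w (otherWire w m r) m ms

/-- the list of all nodes visited by the path (switching nodes and straight passes). -/
def visitList (w : List ℕ) (k : ℕ) : List ℕ → List ℕ
  | [] => []
  | m :: ms => tailList w k m ++ m :: visitTail w (otherWire w m k) m ms

/-- `(k, ms)` encodes a rigorous (Gleizer–Postnikov) path in `G(i, k)`:
it starts at `L_k` going up the wire `ℓ_k`, switches wires exactly at the nodes
listed in `ms`, respects the orientation, ends at `L_{k+1}`, contains no forbidden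
fragment and passes through each node at most once. -/
def IsGPPath (n : ℕ) (w : List ℕ) (k : ℕ) (ms : List ℕ) : Prop :=
  1 ≤ k ∧ k ≤ n ∧
  (match ms with
   | [] => False
   | m :: rest =>
       ValidNode w m ∧ NodeOnWire w m k ∧
       (∀ j ∈ tailList w k m, ¬ Forbidden w k j k) ∧
       TravelOK w k (otherWire w m k) m rest) ∧
  (visitList w k ms).Nodup

/-- the set `GP(i)` of all rigorous paths of `G(i)`. -/
def GP (n : ℕ) (w : List ℕ) : Set (ℕ × List ℕ) := {p | IsGPPath n w p.1 p.2}

/-- `|GP(i)|`, the number of rigorous paths. -/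
def numGP (n : ℕ) (w : List ℕ) : ℕ := (GP n w).ncard

/-- the successive switches of a path: `(node, from-wire, to-wire)`. -/
def pathSwitches (w : List ℕ) : ℕ → List ℕ → List (ℕ × ℕ × ℕ)
  | _, [] => []
  | r, m :: ms => (m, r, otherWire w m r) :: pathSwitches w (otherWire w m r) ms

/-- the wire-expression of a path: the successive wires travelled. -/
def wireSeq (w : List ℕ) : ℕ → List ℕ → List ℕ
  | r, [] => [r]
  | r, m :: ms => r :: wireSeq w (otherWire w m r) ms

/-- the peaks of a path: switching nodes where the path switches from an
upward wire to a downward wire. -/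
def peaks (w : List ℕ) (k : ℕ) (ms : List ℕ) : List ℕ :=
  ((pathSwitches w k ms).filter (fun e => decide (e.2.1 ≤ k ∧ k < e.2.2))).map (·.1)

/-! ### String cone, `λ`-cone, string polytope -/

/-- `N = n(n+1)/2`, the number of nodes. -/
abbrev Dim (n : ℕ) : ℕ := n * (n + 1) / 2

/-- the coefficient `a_j` of `t_j` in the string inequality of the path `(k, ms)`:
`+1` if the path switches at `t_j` from `ℓ_r` to `ℓ_s` with `r < s`,
`-1` if it switches with `r > s`, and `0` otherwise. -/
def coeff (w : List ℕ) (k : ℕ) (ms : List ℕ) (j : ℕ) : ℝ :=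
  ((pathSwitches w k ms).map (fun e =>
    if e.1 = j then (if e.2.1 < e.2.2 then (1 : ℝ) else -1) else 0)).sum

/-- the (primitive inward normal) coefficient vector of the string inequality of a path. -/
def normalVec (n : ℕ) (w : List ℕ) (p : ℕ × List ℕ) : Fin (Dim n) → ℝ :=
  fun j => coeff w p.1 p.2 ((j : ℕ) + 1)

/-- the left-hand side `∑ a_j t_j` of the string inequality of the path `p`. -/
def stringIneq (n : ℕ) (w : List ℕ) (p : ℕ × List ℕ) (t : Fin (Dim n) → ℝ) : ℝ :=
  ∑ j : Fin (Dim n), normalVec n w p j * t j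

/-- the string cone `C_i ⊆ ℝ^N`. -/
def stringCone (n : ℕ) (w : List ℕ) : Set (Fin (Dim n) → ℝ) :=
  {t | ∀ p ∈ GP n w, 0 ≤ stringIneq n w p t}

/-- the polyhedron cut out by all string inequalities except the one of `p₀`. -/
def stringConeExcept (n : ℕ) (w : List ℕ) (p₀ : ℕ × List ℕ) : Set (Fin (Dim n) → ℝ) :=
  {t | ∀ p ∈ GP n w, p ≠ p₀ → 0 ≤ stringIneq n w p t}

/-- the coefficient `a_k` in the `λ`-inequality of node `t_j`:
`1` if `t_k` is one column left or right of `t_j`, `-2` if in the same column. -/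
def lamCoeff (w : List ℕ) (j k : ℕ) : ℝ :=
  if letterAt w k = letterAt w j then -2
  else if letterAt w k = letterAt w j + 1 ∨ letterAt w k + 1 = letterAt w j then 1
  else 0

/-- the `λ`-inequality of node `t_{j+1}`:
`t_j ≤ λ_{i_j} + ∑_{k > j} a_k t_k`. -/
def LamIneq (n : ℕ) (w : List ℕ) (lam : ℕ → ℤ) (j : Fin (Dim n)) (t : Fin (Dim n) → ℝ) : Prop :=
  t j ≤ (lam (letterAt w ((j : ℕ) + 1)) : ℝ) +
    ∑ k : Fin (Dim n),
      (if (j : ℕ) < (k : ℕ) then lamCoeff w ((j : ℕ) + 1) ((k : ℕ) + 1) else 0) * t k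

/-- the `λ`-cone `C_i^λ ⊆ ℝ^N`. -/
def lamCone (n : ℕ) (w : List ℕ) (lam : ℕ → ℤ) : Set (Fin (Dim n) → ℝ) :=
  {t | ∀ j, LamIneq n w lam j t}

/-- the polyhedron cut out by all `λ`-inequalities except the one of `j₀`. -/
def lamConeExcept (n : ℕ) (w : List ℕ) (lam : ℕ → ℤ) (j₀ : Fin (Dim n)) :
    Set (Fin (Dim n) → ℝ) :=
  {t | ∀ j, j ≠ j₀ → LamIneq n w lam j t}

/-- the string polytope `Δ_i(λ) = C_i ∩ C_i^λ`. -/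
def stringPolytope (n : ℕ) (w : List ℕ) (lam : ℕ → ℤ) : Set (Fin (Dim n) → ℝ) :=
  stringCone n w ∩ lamCone n w lam

/-- `λ = λ_1 ϖ_1 + ⋯ + λ_n ϖ_n` is a dominant integral weight: all `λ_j ≥ 0`. -/
def Dominant (n : ℕ) (lam : ℕ → ℤ) : Prop := ∀ j, 1 ≤ j → j ≤ n → 0 ≤ lam j

/-- `λ` is a regular dominant integral weight: all `λ_j > 0`. -/
def RegularDominant (n : ℕ) (lam : ℕ → ℤ) : Prop := ∀ j, 1 ≤ j → j ≤ n → 0 < lam j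

/-! ### Unimodular equivalence, Gelfand–Cetlin polytope, facets -/

/-- `P` and `Q` are unimodularly equivalent: `Q = M(P) + v` with `M ∈ GL(m, ℤ)`, `v ∈ ℤ^m`. -/
def UnimodEquiv {m : ℕ} (P Q : Set (Fin m → ℝ)) : Prop :=
  ∃ (M : Matrix (Fin m) (Fin m) ℤ) (v : Fin m → ℤ), IsUnit M.det ∧
    Q = (fun x i => (∑ j, (M i j : ℝ) * x j) + (v i : ℝ)) '' P

/-- the entry `x_{k,j}` (`1 ≤ j ≤ k ≤ n+1`) of a Gelfand–Cetlin pattern, where the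
top row is `x_{n+1,j} = λ_j + ⋯ + λ_n` and `x_{n+1,n+1} = 0`; the pair `(k, j)` is
encoded as the coordinate `k(k-1)/2 + (j-1)` of `ℝ^N`. -/
def gcX (n : ℕ) (lam : ℕ → ℤ) (x : Fin (Dim n) → ℝ) (k j : ℕ) : ℝ :=
  if k = n + 1 then (if j ≤ n then ∑ t ∈ Finset.Icc j n, (lam t : ℝ) else 0)
  else if h : k * (k - 1) / 2 + (j - 1) < Dim n then x ⟨k * (k - 1) / 2 + (j - 1), h⟩ else 0

/-- the Gelfand–Cetlin polytope `GC(λ) ⊆ ℝ^N`. -/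
def GCPolytope (n : ℕ) (lam : ℕ → ℤ) : Set (Fin (Dim n) → ℝ) :=
  {x | ∀ k j, 1 ≤ k → k ≤ n → 1 ≤ j → j ≤ k →
      gcX n lam x k j ≤ gcX n lam x (k + 1) j ∧
      gcX n lam x (k + 1) (j + 1) ≤ gcX n lam x k j}

/-- a face of a convex set: a convex extreme subset. -/
def IsFaceSet {m : ℕ} (S F : Set (Fin m → ℝ)) : Prop := IsExtreme ℝ S F ∧ Convex ℝ F

/-- a facet: a maximal proper face. -/
def IsFacet {m : ℕ} (S F : Set (Fin m → ℝ)) : Prop :=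
  IsFaceSet S F ∧ F ≠ S ∧ ∀ G, IsFaceSet S G → G ≠ S → F ⊆ G → F = G

/-- the number of facets. -/
def numFacets {m : ℕ} (S : Set (Fin m → ℝ)) : ℕ := {F | IsFacet S F}.ncard

/-- combinatorial equivalence: an inclusion-preserving bijection between face lattices. -/
def CombEquiv {m : ℕ} (S T : Set (Fin m → ℝ)) : Prop :=
  ∃ e : {F // IsFaceSet S F} ≃ {F // IsFaceSet T F},
    ∀ F G : {F // IsFaceSet S F}, F.1 ⊆ G.1 ↔ (e F).1 ⊆ (e G).1

/-! ### Indices, contractions and extensions -/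

/-- the `D`-index `ind_D(i) = |i_D^+|` for a decomposition `i ∼ i_D^- D_n i_D^+`
(independent of the decomposition). -/
def indD (n : ℕ) (w : List ℕ) : ℕ :=
  sInf {s | ∃ u v : List ℕ, v.length = s ∧ TwoMoveEquiv w (u ++ descWord n ++ v)}

/-- the `A`-index `ind_A(i) = |i_A^+|` for a decomposition `i ∼ i_A^- A_n i_A^+`. -/
def indA (n : ℕ) (w : List ℕ) : ℕ :=
  sInf {s | ∃ u v : List ℕ, v.length = s ∧ TwoMoveEquiv w (u ++ ascWord n ++ v)}

/-- `w'` is a `D`-contraction `C_D(w) = i_D^- (i_D^+ - 1)` of `w ∈ Σ_{n+1}`. -/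
def IsContractionD (n : ℕ) (w w' : List ℕ) : Prop :=
  ∃ u v : List ℕ, TwoMoveEquiv w (u ++ descWord n ++ v) ∧ w' = u ++ v.map (· - 1)

/-- `w'` is an `A`-contraction `C_A(w) = (i_A^- - 1) i_A^+` of `w ∈ Σ_{n+1}`. -/
def IsContractionA (n : ℕ) (w w' : List ℕ) : Prop :=
  ∃ u v : List ℕ, TwoMoveEquiv w (u ++ ascWord n ++ v) ∧ w' = u.map (· - 1) ++ v

/-- the `D`-extension `E_D(s) : Σ_{n+1} → Σ_{n+2}`,
`i = i^-(s) i^+(s) ↦ i^-(s) D_{n+1} (i^+(s) + 1)` where `|i^+(s)| = s`. -/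
def extD (n : ℕ) (s : ℕ) (w : List ℕ) : List ℕ :=
  w.take (w.length - s) ++ descWord (n + 1) ++ (w.drop (w.length - s)).map (· + 1)

/-- the `A`-extension `E_A(s) : Σ_{n+1} → Σ_{n+2}`,
`i = i^-(s) i^+(s) ↦ (i^-(s) + 1) A_{n+1} i^+(s)`. -/
def extA (n : ℕ) (s : ℕ) (w : List ℕ) : List ℕ :=
  (w.take (w.length - s)).map (· + 1) ++ ascWord (n + 1) ++ w.drop (w.length - s)

/-- there exists `(σ_1, …, σ_n) ∈ {A, D}^n` (here `true = D`, `false = A`) such that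
`ind_{σ_k}(C_{σ_{k+1}} ∘ ⋯ ∘ C_{σ_n}(i)) = 0` for all `k = n, …, 1`. -/
def SimplicialWord (n : ℕ) (w : List ℕ) : Prop :=
  ∃ (σ : ℕ → Bool) (c : ℕ → List ℕ), c n = w ∧
    ∀ k, 1 ≤ k → k ≤ n →
      (if σ k then IsContractionD k (c k) (c (k - 1)) ∧ indD k (c k) = 0
       else IsContractionA k (c k) (c (k - 1)) ∧ indA k (c k) = 0)


/-- the `D`-coindex `coind_D(i) = |i_D^-|`. -/
def coindD (n : ℕ) (w : List ℕ) : ℕ :=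
  sInf {s | ∃ u v : List ℕ, u.length = s ∧ TwoMoveEquiv w (u ++ descWord n ++ v)}

/-- the `A`-coindex `coind_A(i) = |i_A^-|`. -/
def coindA (n : ℕ) (w : List ℕ) : ℕ :=
  sInf {s | ∃ u v : List ℕ, u.length = s ∧ TwoMoveEquiv w (u ++ ascWord n ++ v)}

/-- the `a`-th (0-based) coordinate of a point of `ℝ^N`. -/
def entry (n : ℕ) (t : Fin (Dim n) → ℝ) (a : ℕ) : ℝ :=
  if h : a < Dim n then t ⟨a, h⟩ else 0

/-- the product of cones
`t_1 ≥ 0`, `t_2 ≥ t_3 ≥ 0`, …, `t_{N-n+1} ≥ ⋯ ≥ t_N ≥ 0` (in `ℝ^N`, 1-based: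
for `k = 1, …, n` the chain `t_{k(k-1)/2+1} ≥ ⋯ ≥ t_{k(k-1)/2+k} ≥ 0`). -/
def chainCone (n : ℕ) : Set (Fin (Dim n) → ℝ) :=
  {t | ∀ k j, 1 ≤ k → k ≤ n → 1 ≤ j → j ≤ k →
    (if j = k then 0 else entry n t (k * (k - 1) / 2 + j)) ≤
      entry n t (k * (k - 1) / 2 + (j - 1))}


/-! ### auxiliary two-move lemmas -/

abbrev TMComm (a b : ℕ) : Prop := a + 1 < b ∨ b + 1 < a

lemma tmstep_append_left (x : List ℕ) {w w' : List ℕ} (h : TwoMoveStep w w') :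
    TwoMoveStep (x ++ w) (x ++ w') := by
  obtain ⟨u, v, a, b, hab, rfl, rfl⟩ := h
  exact ⟨x ++ u, v, a, b, hab, by simp, by simp⟩

lemma tmstep_append_right (x : List ℕ) {w w' : List ℕ} (h : TwoMoveStep w w') :
    TwoMoveStep (w ++ x) (w' ++ x) := by
  obtain ⟨u, v, a, b, hab, rfl, rfl⟩ := h
  exact ⟨u, v ++ x, a, b, hab, by simp, by simp⟩

lemma tmequiv_append_left (x : List ℕ) {w w' : List ℕ} (h : TwoMoveEquiv w w') :
    TwoMoveEquiv (x ++ w) (x ++ w') :=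
  Relation.ReflTransGen.lift (x ++ ·) (fun _ _ => tmstep_append_left x) _ _ h

lemma tmequiv_append_right (x : List ℕ) {w w' : List ℕ} (h : TwoMoveEquiv w w') :
    TwoMoveEquiv (w ++ x) (w' ++ x) :=
  Relation.ReflTransGen.lift (· ++ x) (fun _ _ => tmstep_append_right x) _ _ h

lemma tmequiv_cons_of_comm {a : ℕ} : ∀ {u : List ℕ}, (∀ b ∈ u, TMComm a b) →
    TwoMoveEquiv (a :: u) (u ++ [a])
  | [], _ => .refl
  | b :: u, h => by
    have h1 : TwoMoveStep (a :: b :: u) (b :: a :: u) :=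
      ⟨[], u, a, b, h b (by simp), rfl, rfl⟩
    have h2 : TwoMoveEquiv (a :: u) (u ++ [a]) :=
      tmequiv_cons_of_comm (fun c hc => h c (by simp [hc]))
    exact (Relation.ReflTransGen.single h1).trans (tmequiv_append_left [b] h2)

lemma tmequiv_commute_append : ∀ (x u : List ℕ), (∀ a ∈ x, ∀ b ∈ u, TMComm a b) →
    TwoMoveEquiv (x ++ u) (u ++ x)
  | [], u, _ => by simp only [List.nil_append, List.append_nil]; exact .refl
  | a :: x, u, h => by
    have ih := tmequiv_commute_append x u (fun a' ha' b hb => h a' (by simp [ha']) b hb)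
    have h1 : TwoMoveEquiv (a :: (x ++ u)) (a :: (u ++ x)) := tmequiv_append_left [a] ih
    have h2 : TwoMoveEquiv ((a :: u) ++ x) ((u ++ [a]) ++ x) :=
      tmequiv_append_right x (tmequiv_cons_of_comm (fun b hb => h a (by simp) b hb))
    have e1 : (a :: x) ++ u = a :: (x ++ u) := rfl
    have e2 : a :: (u ++ x) = (a :: u) ++ x := rfl
    have e3 : (u ++ [a]) ++ x = u ++ (a :: x) := by simp
    rw [e1, ← e3]
    exact h1.trans (e2 ▸ h2)

lemma tmequiv_split (p : ℕ → Bool) : ∀ (z : List ℕ),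
    (∀ a ∈ z, ∀ b ∈ z, p a = true → p b = false → TMComm a b) →
    TwoMoveEquiv z (z.filter p ++ z.filter (fun a => !p a))
  | [], _ => .refl
  | a :: z, h => by
    have ih := tmequiv_split p z (fun a' ha' b hb hb1 hb2 =>
      h a' (by simp [ha']) b (by simp [hb]) hb1 hb2)
    have h1 : TwoMoveEquiv (a :: z) (a :: (z.filter p ++ z.filter (fun a => !p a))) :=
      tmequiv_append_left [a] ih
    by_cases hpa : p a = true
    · rw [List.filter_cons, List.filter_cons, hpa]
      simpa using h1
    · have hpa' : p a = false := by simpa using hpa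
      have h2 : TwoMoveEquiv (a :: z.filter p) (z.filter p ++ [a]) := by
        refine tmequiv_cons_of_comm (fun b hb => ?_)
        have hb' := List.mem_filter.1 hb
        exact (h b (by simp [hb'.1]) a (by simp) hb'.2 hpa').symm
      have h3 : TwoMoveEquiv ((a :: z.filter p) ++ z.filter (fun a => !p a))
          ((z.filter p ++ [a]) ++ z.filter (fun a => !p a)) :=
        tmequiv_append_right _ h2
      rw [List.filter_cons, List.filter_cons, hpa', if_neg (by simp)]
      simp only [Bool.not_false, if_pos rfl]
      have e : (z.filter p ++ [a]) ++ z.filter (fun a => !p a)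
          = z.filter p ++ a :: z.filter (fun a => !p a) := by simp
      exact h1.trans (e ▸ h3)

lemma tmstep_perm {w w' : List ℕ} (h : TwoMoveStep w w') : w.Perm w' := by
  obtain ⟨u, v, a, b, _, rfl, rfl⟩ := h
  exact List.Perm.append_left u (List.Perm.swap b a v)

lemma tmequiv_perm {w w' : List ℕ} (h : TwoMoveEquiv w w') : w.Perm w' := by
  induction h with
  | refl => exact List.Perm.refl w
  | tail _ h2 ih => exact ih.trans (tmstep_perm h2)

/-! ### the segmented structure -/

def descFrom : ℕ → List ℕ
  | 0 => []
  | c + 1 => (c + 1) :: descFrom c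

lemma descWord_eq (n : ℕ) : descWord n = descFrom n := by
  induction n with
  | zero => rfl
  | succ m ih =>
    unfold descWord ascWord at *
    rw [List.range_succ]
    simp only [List.map_append, List.reverse_append, List.map_cons, List.map_nil,
      List.reverse_cons, List.reverse_nil, List.nil_append, List.cons_append, descFrom]
    rw [← ih]

lemma descFrom_mem : ∀ (c : ℕ), ∀ b ∈ descFrom c, 1 ≤ b ∧ b ≤ c
  | 0, b, hb => by simp [descFrom] at hb
  | c + 1, b, hb => by
    rcases (by simpa [descFrom] using hb : b = c + 1 ∨ b ∈ descFrom c) with h | h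
    · omega
    · have := descFrom_mem c b h; omega

def Seg : ℕ → List ℕ → Prop
  | 0, _ => True
  | c + 1, w => ∃ x rest, (∀ a ∈ x, a ≤ c ∨ c + 3 ≤ a) ∧ w = x ++ (c + 1) :: rest ∧ Seg c rest

lemma seg_main : ∀ (c : ℕ) (w : List ℕ), Seg c w →
    ∃ u v : List ℕ, (∀ a ∈ u, a + 1 ≤ c) ∧ TwoMoveEquiv w (u ++ descFrom c ++ v)
  | 0, w, _ => ⟨[], w, by simp, by simp only [descFrom, List.nil_append]; exact .refl⟩
  | c + 1, w, hseg => by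
    obtain ⟨x, rest, hx, rfl, hrest⟩ := hseg
    obtain ⟨u, v, hu, he⟩ := seg_main c rest hrest
    -- move the crossing letter (c+1) left past u
    have h2 : TwoMoveEquiv ((c + 1) :: u) (u ++ [c + 1]) := by
      refine tmequiv_cons_of_comm (fun b hb => ?_)
      have := hu b hb; right; omega
    -- w ∼ x ++ (c+1) :: (u ++ descFrom c ++ v)
    have step1 : TwoMoveEquiv (x ++ (c + 1) :: rest)
        (x ++ (c + 1) :: (u ++ descFrom c ++ v)) :=
      tmequiv_append_left x (tmequiv_append_left [c + 1] he)
    have step2 : TwoMoveEquiv (x ++ (c + 1) :: (u ++ descFrom c ++ v))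
        (x ++ (u ++ descFrom (c + 1) ++ v)) := by
      have h3 : TwoMoveEquiv (((c + 1) :: u) ++ (descFrom c ++ v))
          ((u ++ [c + 1]) ++ (descFrom c ++ v)) := tmequiv_append_right _ h2
      have e1 : (c + 1) :: (u ++ descFrom c ++ v) = ((c + 1) :: u) ++ (descFrom c ++ v) := by
        simp
      have e2 : (u ++ [c + 1]) ++ (descFrom c ++ v) = u ++ descFrom (c + 1) ++ v := by
        simp [descFrom]
      exact tmequiv_append_left x (by rw [e1, ← e2]; exact h3)
    -- split x into belows and aboves
    set p : ℕ → Bool := fun a => decide (a ≤ c) with hp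
    have hsplit : TwoMoveEquiv x (x.filter p ++ x.filter (fun a => !p a)) := by
      refine tmequiv_split p x (fun a ha b hb hpa hpb => ?_)
      have h1 : a ≤ c := by simpa [hp] using hpa
      have h2 : ¬ (b ≤ c) := by simpa [hp] using hpb
      have := hx b hb
      left; omega
    have hB : ∀ a ∈ x.filter p, a ≤ c := fun a ha => by
      simpa [hp] using (List.mem_filter.1 ha).2
    have hA : ∀ a ∈ x.filter (fun a => !p a), c + 3 ≤ a := fun a ha => by
      have h1 := List.mem_filter.1 ha
      have h2 : ¬ (a ≤ c) := by simpa [hp] using h1.2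
      have := hx a h1.1
      omega
    -- move the aboves right past u ++ descFrom (c+1)
    have hmove : TwoMoveEquiv (x.filter (fun a => !p a) ++ (u ++ descFrom (c + 1)))
        ((u ++ descFrom (c + 1)) ++ x.filter (fun a => !p a)) := by
      refine tmequiv_commute_append _ _ (fun a ha b hb => ?_)
      have ha' := hA a ha
      rcases List.mem_append.1 hb with hb | hb
      · have := hu b hb; right; omega
      · have := descFrom_mem (c + 1) b hb; right; omega
    refine ⟨x.filter p ++ u, x.filter (fun a => !p a) ++ v, ?_, ?_⟩
    · intro a ha
      rcases List.mem_append.1 ha with ha | ha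
      · have := hB a ha; omega
      · have := hu a ha; omega
    · -- assemble the chain
      have step3 : TwoMoveEquiv (x ++ (u ++ descFrom (c + 1) ++ v))
          ((x.filter p ++ x.filter (fun a => !p a)) ++ (u ++ descFrom (c + 1) ++ v)) :=
        tmequiv_append_right _ hsplit
      have step4 : TwoMoveEquiv
          (x.filter p ++ ((x.filter (fun a => !p a) ++ (u ++ descFrom (c + 1))) ++ v))
          (x.filter p ++ (((u ++ descFrom (c + 1)) ++ x.filter (fun a => !p a)) ++ v)) :=
        tmequiv_append_left _ (tmequiv_append_right _ hmove)
      have efin : (x.filter p ++ (((u ++ descFrom (c + 1)) ++ x.filter (fun a => !p a)) ++ v))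
          = (x.filter p ++ u) ++ descFrom (c + 1) ++ (x.filter (fun a => !p a) ++ v) := by
        simp
      have e4 : ((x.filter p ++ x.filter (fun a => !p a)) ++ (u ++ descFrom (c + 1) ++ v))
          = (x.filter p ++ ((x.filter (fun a => !p a) ++ (u ++ descFrom (c + 1))) ++ v)) := by
        simp
      have step4' : TwoMoveEquiv
          ((x.filter p ++ x.filter (fun a => !p a)) ++ (u ++ descFrom (c + 1) ++ v))
          ((x.filter p ++ u) ++ descFrom (c + 1) ++ (x.filter (fun a => !p a) ++ v)) := by
        rw [e4]
        exact efin ▸ step4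
      exact step1.trans (step2.trans (step3.trans step4'))

/-! ### wiring trajectory -/

lemma sTrans_apply (a x : ℕ) :
    sTrans a x = if x = a then a + 1 else if x = a + 1 then a else x := by
  simp [sTrans, Equiv.swap_apply_def]

lemma wordProd_nil : wordProd [] = 1 := rfl

lemma wordProd_cons (a : ℕ) (t : List ℕ) : wordProd (a :: t) = sTrans a * wordProd t := by
  simp [wordProd]

def traj : List ℕ → ℕ → ℕ
  | [], c => c
  | a :: t, c => traj t (sTrans a c)

def GoodWire : List ℕ → ℕ → Prop
  | [], _ => True
  | a :: t, c => a ≠ c ∧ GoodWire t (sTrans a c)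

lemma traj_eq : ∀ (w : List ℕ) (c : ℕ), traj w c = (wordProd w).symm c
  | [], c => rfl
  | a :: t, c => by
    rw [wordProd_cons]
    show traj t (sTrans a c) = ((wordProd t).symm * (sTrans a)⁻¹) c
    have : (sTrans a)⁻¹ c = sTrans a c := by
      simp [sTrans]
    rw [Equiv.Perm.mul_apply, this, traj_eq t]

lemma seg_of_good : ∀ (w : List ℕ) (c : ℕ), (∀ a ∈ w, 1 ≤ a) →
    GoodWire w (c + 1) → traj w (c + 1) = 1 → Seg c w
  | [], c, _, _, htraj => by
    have : c = 0 := by simpa [traj] using htraj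
    subst this; trivial
  | a :: t, c, hlet, hgood, htraj => by
    obtain ⟨hne, hgood'⟩ := hgood
    have ha1 : 1 ≤ a := (hlet a (by simp))
    by_cases hac : a = c
    · -- crossing
      subst hac
      obtain ⟨c', rfl⟩ : ∃ c', a = c' + 1 := ⟨a - 1, by omega⟩
      have hs : sTrans (c' + 1) (c' + 1 + 1) = c' + 1 := by
        rw [sTrans_apply]; simp
      have htraj' : traj t (c' + 1) = 1 := by
        simpa [traj, hs] using htraj
      have hgood'' : GoodWire t (c' + 1) := by
        rwa [hs] at hgood'
      have hseg := seg_of_good t c' (fun b hb => hlet b (by simp [hb])) hgood'' htraj'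
      exact ⟨[], t, by simp, rfl, hseg⟩
    · -- pass-through
      have hs : sTrans a (c + 1) = c + 1 := by
        rw [sTrans_apply]
        have h1 : ¬ (c + 1 = a) := fun h => hne (by omega)
        have h2 : ¬ (c + 1 = a + 1) := fun h => hac (by omega)
        simp [h1, h2, Ne.symm hac]
      have htraj' : traj t (c + 1) = 1 := by simpa [traj, hs] using htraj
      have hgood'' : GoodWire t (c + 1) := by rwa [hs] at hgood'
      have hseg := seg_of_good t c (fun b hb => hlet b (by simp [hb])) hgood'' htraj'
      cases c with
      | zero => trivial
      | succ c' =>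
        obtain ⟨x, rest, hx, rfl, hrest⟩ := hseg
        refine ⟨a :: x, rest, ?_, rfl, hrest⟩
        intro b hb
        rcases List.mem_cons.1 hb with rfl | hb'
        · have h2 : b ≠ c' + 2 := fun h => hne (by omega)
          have h1 : b ≠ c' + 1 := hac
          omega
        · exact hx b hb'

/-! ### inversion counting -/

lemma longestPerm_apply (n x : ℕ) :
    longestPerm n x = if 1 ≤ x ∧ x ≤ n + 1 then n + 2 - x else x := rfl

lemma sTrans_sq (a : ℕ) : sTrans a * sTrans a = 1 := by
  simp [sTrans]

def InvSet (n : ℕ) (π : Equiv.Perm ℕ) : Finset (ℕ × ℕ) :=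
  ((Finset.Icc 1 (n + 1)) ×ˢ (Finset.Icc 1 (n + 1))).filter
    fun p => p.1 < p.2 ∧ π p.2 < π p.1

lemma mem_InvSet {n : ℕ} {π : Equiv.Perm ℕ} {p : ℕ × ℕ} :
    p ∈ InvSet n π ↔ (1 ≤ p.1 ∧ p.1 ≤ n + 1) ∧ (1 ≤ p.2 ∧ p.2 ≤ n + 1) ∧
      p.1 < p.2 ∧ π p.2 < π p.1 := by
  simp only [InvSet, Finset.mem_filter, Finset.mem_product, Finset.mem_Icc]
  tauto

lemma invSet_transfer {n a : ℕ} (ha1 : 1 ≤ a) (ha2 : a ≤ n) (π : Equiv.Perm ℕ)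
    {p : ℕ × ℕ} (hp : p ∈ (InvSet n (π * sTrans a)).erase (a, a + 1)) :
    (sTrans a p.1, sTrans a p.2) ∈ (InvSet n π).erase (a, a + 1) := by
  obtain ⟨hne, hmem⟩ := Finset.mem_erase.1 hp
  obtain ⟨hb1, hb2, hlt, hinv⟩ := mem_InvSet.1 hmem
  have hne2 : ¬ (p.1 = a ∧ p.2 = a + 1) := by
    intro ⟨h1, h2⟩; exact hne (Prod.ext h1 h2)
  refine Finset.mem_erase.2 ⟨?_, mem_InvSet.2 ⟨?_, ?_, ?_, ?_⟩⟩
  · simp only [ne_eq, Prod.mk.injEq, not_and]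
    intro h1 h2
    rw [sTrans_apply] at h1 h2
    split_ifs at h1 h2 <;> omega
  · simp only [sTrans_apply]; split_ifs <;> omega
  · simp only [sTrans_apply]; split_ifs <;> omega
  · simp only [sTrans_apply]; split_ifs <;> omega
  · have e2 : (π * sTrans a) p.2 = π (sTrans a p.2) := rfl
    have e1 : (π * sTrans a) p.1 = π (sTrans a p.1) := rfl
    rw [e1, e2] at hinv
    exact hinv

lemma invSet_erase_card {n a : ℕ} (ha1 : 1 ≤ a) (ha2 : a ≤ n) (π : Equiv.Perm ℕ) :
    ((InvSet n (π * sTrans a)).erase (a, a + 1)).card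
      = ((InvSet n π).erase (a, a + 1)).card := by
  have hπ : (π * sTrans a) * sTrans a = π := by
    rw [mul_assoc, sTrans_sq, mul_one]
  refine Finset.card_bij' (fun p _ => (sTrans a p.1, sTrans a p.2))
    (fun p _ => (sTrans a p.1, sTrans a p.2)) ?_ ?_ ?_ ?_
  · intro p hp
    exact invSet_transfer ha1 ha2 π hp
  · intro p hp
    exact invSet_transfer ha1 ha2 (π * sTrans a) (by rwa [hπ])
  · intro p hp
    ext <;> simp [sTrans, Equiv.swap_apply_self]
  · intro p hp
    ext <;> simp [sTrans, Equiv.swap_apply_self]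

lemma invSet_step {n a : ℕ} (ha1 : 1 ≤ a) (ha2 : a ≤ n) (π : Equiv.Perm ℕ) :
    (π a < π (a + 1) → (InvSet n (π * sTrans a)).card = (InvSet n π).card + 1) ∧
    (π (a + 1) < π a → (InvSet n (π * sTrans a)).card + 1 = (InvSet n π).card) := by
  have hkey := invSet_erase_card ha1 ha2 π
  have hσ1 : sTrans a a = a + 1 := by rw [sTrans_apply]; simp
  have hσ2 : sTrans a (a + 1) = a := by rw [sTrans_apply]; split_ifs <;> omega
  constructor
  · intro hlt
    have hT : (a, a + 1) ∈ InvSet n (π * sTrans a) := by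
      refine mem_InvSet.2 ⟨by omega, by omega, by omega, ?_⟩
      show π (sTrans a (a + 1)) < π (sTrans a a)
      rw [hσ1, hσ2]; exact hlt
    have hS : (a, a + 1) ∉ InvSet n π := by
      intro h
      have h2 : π (a + 1) < π a := (mem_InvSet.1 h).2.2.2
      omega
    rw [← Finset.card_erase_add_one hT, hkey, Finset.erase_eq_self.2 hS]
  · intro hlt
    have hS : (a, a + 1) ∈ InvSet n π := mem_InvSet.2 ⟨by omega, by omega, by omega, hlt⟩
    have hT : (a, a + 1) ∉ InvSet n (π * sTrans a) := by
      intro h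
      have := (mem_InvSet.1 h).2.2.2
      rw [show (π * sTrans a) (a+1) = π (sTrans a (a+1)) from rfl,
        show (π * sTrans a) a = π (sTrans a a) from rfl, hσ1, hσ2] at this
      omega
    rw [← Finset.card_erase_add_one hS, ← hkey, Finset.erase_eq_self.2 hT]

lemma wordProd_ne_aux {π : Equiv.Perm ℕ} {a : ℕ} : π a ≠ π (a + 1) :=
  fun h => absurd (π.injective h) (by omega)

lemma invSet_prod_le (n : ℕ) : ∀ (t : List ℕ) (π : Equiv.Perm ℕ),
    (∀ a ∈ t, 1 ≤ a ∧ a ≤ n) →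
    (InvSet n (π * wordProd t)).card ≤ (InvSet n π).card + t.length
  | [], π, _ => by simp [wordProd_nil]
  | a :: t, π, hlet => by
    have ha := hlet a (by simp)
    have e : π * wordProd (a :: t) = (π * sTrans a) * wordProd t := by
      rw [wordProd_cons, mul_assoc]
    have ih := invSet_prod_le n t (π * sTrans a) (fun b hb => hlet b (by simp [hb]))
    have hstep := invSet_step ha.1 ha.2 π
    rw [e]
    rcases lt_trichotomy (π a) (π (a + 1)) with h | h | h
    · have := hstep.1 h
      simp only [List.length_cons]
      omega
    · exact absurd h wordProd_ne_aux
    · have := hstep.2 h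
      simp only [List.length_cons]
      omega

lemma good_of_card (n : ℕ) : ∀ (w : List ℕ) (π : Equiv.Perm ℕ),
    (∀ a ∈ w, 1 ≤ a ∧ a ≤ n) →
    (∀ x, 1 ≤ x → x ≤ n + 1 → (1 ≤ π x ∧ π x ≤ n + 1)) →
    (InvSet n (π * wordProd w)).card = (InvSet n π).card + w.length →
    GoodWire w (π.symm (n + 1))
  | [], _, _, _, _ => trivial
  | a :: t, π, hlet, hpres, hcard => by
    have ha := hlet a (by simp)
    have e : π * wordProd (a :: t) = (π * sTrans a) * wordProd t := by
      rw [wordProd_cons, mul_assoc]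
    rw [e, List.length_cons] at hcard
    have hbound := invSet_prod_le n t (π * sTrans a) (fun b hb => hlet b (by simp [hb]))
    have hstep := invSet_step ha.1 ha.2 π
    have hlt : π a < π (a + 1) := by
      rcases lt_trichotomy (π a) (π (a + 1)) with h | h | h
      · exact h
      · exact absurd h wordProd_ne_aux
      · have := hstep.2 h
        omega
    have hcard' : (InvSet n (π * sTrans a)).card = (InvSet n π).card + 1 := hstep.1 hlt
    constructor
    · intro h
      have h1 : π a = n + 1 := by rw [h]; exact π.apply_symm_apply (n + 1)
      have h2 := (hpres (a + 1) (by omega) (by omega)).2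
      omega
    · have hpres' : ∀ x, 1 ≤ x → x ≤ n + 1 → 1 ≤ (π * sTrans a) x ∧ (π * sTrans a) x ≤ n + 1 := by
        intro x h1 h2
        have hs : 1 ≤ sTrans a x ∧ sTrans a x ≤ n + 1 := by
          rw [sTrans_apply]; split_ifs <;> omega
        exact hpres _ hs.1 hs.2
      have ih := good_of_card n t (π * sTrans a) (fun b hb => hlet b (by simp [hb])) hpres'
        (by omega)
      have esymm : (π * sTrans a).symm (n + 1) = sTrans a (π.symm (n + 1)) := by
        rw [Equiv.symm_apply_eq]
        show n + 1 = π (sTrans a (sTrans a (π.symm (n + 1))))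
        rw [show sTrans a (sTrans a (π.symm (n+1))) = π.symm (n+1) from
          Equiv.swap_apply_self _ _ _, π.apply_symm_apply]
      rwa [esymm] at ih

lemma invSet_one (n : ℕ) : (InvSet n 1).card = 0 := by
  rw [Finset.card_eq_zero, Finset.eq_empty_iff_forall_notMem]
  intro p hp
  have := mem_InvSet.1 hp
  simp only [Equiv.Perm.one_apply] at this
  omega

lemma card_lt_pairs : ∀ m : ℕ,
    2 * (((Finset.Icc 1 m) ×ˢ (Finset.Icc 1 m)).filter fun p : ℕ × ℕ => p.1 < p.2).card
      = m * (m - 1)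
  | 0 => by decide
  | m + 1 => by
    have ih := card_lt_pairs m
    have hring : (m + 1) * (m + 1 - 1) = m * (m - 1) + 2 * m := by
      cases m with
      | zero => decide
      | succ k =>
        show (k + 2) * (k + 1) = (k + 1) * k + 2 * (k + 1)
        ring
    have hsplit : (((Finset.Icc 1 (m+1)) ×ˢ (Finset.Icc 1 (m+1))).filter
        fun p : ℕ × ℕ => p.1 < p.2)
        = (((Finset.Icc 1 m) ×ˢ (Finset.Icc 1 m)).filter fun p : ℕ × ℕ => p.1 < p.2)
          ∪ (Finset.Icc 1 m).image (fun x => (x, m + 1)) := by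
      ext ⟨x, y⟩
      simp only [Finset.mem_filter, Finset.mem_product, Finset.mem_Icc, Finset.mem_union,
        Finset.mem_image, Prod.mk.injEq]
      constructor
      · rintro ⟨⟨⟨hx1, hx2⟩, ⟨hy1, hy2⟩⟩, hxy⟩
        by_cases hy : y ≤ m
        · exact Or.inl ⟨⟨⟨hx1, by omega⟩, ⟨hy1, hy⟩⟩, hxy⟩
        · exact Or.inr ⟨x, ⟨hx1, by omega⟩, rfl, by omega⟩
      · rintro (⟨⟨⟨hx1, hx2⟩, ⟨hy1, hy2⟩⟩, hxy⟩ | ⟨z, ⟨hz1, hz2⟩, rfl, rfl⟩)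
        · exact ⟨⟨⟨hx1, by omega⟩, ⟨hy1, by omega⟩⟩, hxy⟩
        · exact ⟨⟨⟨hz1, by omega⟩, ⟨by omega, by omega⟩⟩, by omega⟩
    have hdisj : Disjoint
        (((Finset.Icc 1 m) ×ˢ (Finset.Icc 1 m)).filter fun p : ℕ × ℕ => p.1 < p.2)
        ((Finset.Icc 1 m).image (fun x => (x, m + 1))) := by
      rw [Finset.disjoint_left]
      intro p hpA hpB
      have h1 := (Finset.mem_product.1 (Finset.mem_filter.1 hpA).1).2
      rw [Finset.mem_Icc] at h1
      obtain ⟨z, hz, heq⟩ := Finset.mem_image.1 hpB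
      have : p.2 = m + 1 := by rw [← heq]
      omega
    have hinj : Function.Injective (fun x : ℕ => (x, m + 1)) := by
      intro a b h
      simpa using congrArg Prod.fst h
    rw [hsplit, Finset.card_union_of_disjoint hdisj,
      Finset.card_image_of_injective _ hinj, Nat.card_Icc]
    omega

lemma invSet_longest (n : ℕ) : (InvSet n (longestPerm n)).card = n * (n + 1) / 2 := by
  have he : InvSet n (longestPerm n)
      = ((Finset.Icc 1 (n+1)) ×ˢ (Finset.Icc 1 (n+1))).filter fun p : ℕ × ℕ => p.1 < p.2 := by
    ext ⟨x, y⟩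
    simp only [InvSet, Finset.mem_filter, Finset.mem_product, Finset.mem_Icc]
    simp only [longestPerm_apply]
    constructor
    · rintro ⟨h1, h2, _⟩; exact ⟨h1, h2⟩
    · rintro ⟨⟨⟨hx1, hx2⟩, ⟨hy1, hy2⟩⟩, hxy⟩
      refine ⟨⟨⟨hx1, hx2⟩, ⟨hy1, hy2⟩⟩, hxy, ?_⟩
      rw [if_pos ⟨hy1, hy2⟩, if_pos ⟨hx1, hx2⟩]
      omega
  have h2 := card_lt_pairs (n + 1)
  rw [← he] at h2
  have hr : (n + 1) * (n + 1 - 1) = n * (n + 1) := by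
    show (n + 1) * n = n * (n + 1); ring
  omega

lemma desc_half (n : ℕ) (i : List ℕ) (hi : IsReduced n i) :
    ∃ u v : List ℕ, TwoMoveEquiv i (u ++ descWord n ++ v) := by
  obtain ⟨hlen, hlet, hprod⟩ := hi
  have hgood : GoodWire i ((1 : Equiv.Perm ℕ).symm (n + 1)) := by
    apply good_of_card n i 1 hlet (fun x h1 h2 => by simpa using And.intro h1 h2)
    rw [one_mul, hprod, invSet_longest, invSet_one, hlen]
    omega
  have hgood' : GoodWire i (n + 1) := by simpa [Equiv.Perm.one_symm] using hgood
  have htraj : traj i (n + 1) = 1 := by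
    rw [traj_eq, hprod, Equiv.symm_apply_eq, longestPerm_apply]
    rw [if_pos ⟨le_refl 1, by omega⟩]
    omega
  have hseg := seg_of_good i n (fun a ha => (hlet a ha).1) hgood' htraj
  obtain ⟨u, v, _, he⟩ := seg_main n i hseg
  rw [descWord_eq]
  exact ⟨u, v, he⟩

/-! ### reflection a ↦ n+1-a -/

lemma w0_invol (n : ℕ) : Function.Involutive (longestPerm n) := by
  intro x
  rw [longestPerm_apply, longestPerm_apply]
  split_ifs <;> omega

lemma w0_sq (n : ℕ) : longestPerm n * longestPerm n = 1 := by
  ext x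
  exact w0_invol n x

lemma conj_sTrans (n a : ℕ) (h1 : 1 ≤ a) (h2 : a ≤ n) :
    sTrans (n + 1 - a) = longestPerm n * sTrans a * longestPerm n := by
  ext x
  simp only [Equiv.Perm.mul_apply, sTrans_apply, longestPerm_apply]
  split_ifs <;> omega

lemma wordProd_map_reflect (n : ℕ) : ∀ (w : List ℕ), (∀ a ∈ w, 1 ≤ a ∧ a ≤ n) →
    wordProd (w.map (fun a => n + 1 - a)) = longestPerm n * wordProd w * longestPerm n
  | [], _ => by
    rw [List.map_nil, wordProd_nil, mul_one, w0_sq]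
  | a :: t, hlet => by
    have ha := hlet a (by simp)
    rw [List.map_cons, wordProd_cons, wordProd_cons,
      wordProd_map_reflect n t (fun b hb => hlet b (by simp [hb])),
      conj_sTrans n a ha.1 ha.2]
    simp only [mul_assoc]
    rw [← mul_assoc (longestPerm n) (longestPerm n), w0_sq, one_mul]

lemma reflect_reduced (n : ℕ) (i : List ℕ) (hi : IsReduced n i) :
    IsReduced n (i.map (fun a => n + 1 - a)) := by
  obtain ⟨hlen, hlet, hprod⟩ := hi
  refine ⟨by simpa using hlen, ?_, ?_⟩
  · intro a ha
    obtain ⟨b, hb, rfl⟩ := List.mem_map.1 ha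
    have := hlet b hb
    omega
  · rw [wordProd_map_reflect n i hlet, hprod, w0_sq, one_mul]

lemma tmequiv_map_reflect (n : ℕ) {w w' : List ℕ} (h : TwoMoveEquiv w w')
    (hlet : ∀ a ∈ w, 1 ≤ a ∧ a ≤ n) :
    TwoMoveEquiv (w.map (fun a => n + 1 - a)) (w'.map (fun a => n + 1 - a)) := by
  induction h with
  | refl => exact .refl
  | @tail b c h1 h2 ih =>
    refine ih.tail ?_
    have hletb : ∀ a ∈ b, 1 ≤ a ∧ a ≤ n := by
      intro a ha
      exact hlet a ((tmequiv_perm h1).mem_iff.2 ha)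
    obtain ⟨u, v, a, a', hab, rfl, rfl⟩ := h2
    have haa : 1 ≤ a ∧ a ≤ n := hletb a (by simp)
    have haa' : 1 ≤ a' ∧ a' ≤ n := hletb a' (by simp)
    refine ⟨u.map (fun a => n + 1 - a), v.map (fun a => n + 1 - a),
      n + 1 - a, n + 1 - a', by omega, by simp, by simp⟩

lemma map_reflect_invol (n : ℕ) : ∀ (w : List ℕ), (∀ a ∈ w, 1 ≤ a ∧ a ≤ n) →
    (w.map (fun a => n + 1 - a)).map (fun a => n + 1 - a) = w
  | [], _ => rfl
  | a :: t, hlet => by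
    have ha := hlet a (by simp)
    rw [List.map_cons, List.map_cons, map_reflect_invol n t (fun b hb => hlet b (by simp [hb]))]
    congr 1
    omega

lemma map_reflect_asc (n : ℕ) : (ascWord n).map (fun a => n + 1 - a) = descWord n := by
  unfold descWord ascWord
  rw [List.map_map]
  apply List.ext_getElem
  · simp
  · intro i h1 h2
    simp only [List.length_map, List.length_range] at h1 h2
    simp only [List.getElem_map, List.getElem_range, Function.comp_apply,
      List.getElem_reverse, List.length_map, List.length_range]
    omega

lemma map_reflect_desc (n : ℕ) : (descWord n).map (fun a => n + 1 - a) = ascWord n := by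
  have h := congrArg List.reverse (map_reflect_asc n)
  rw [← List.map_reverse] at h
  unfold descWord at *
  rwa [List.reverse_reverse] at h

/-- Proposition on D/A decompositions.
For every reduced word `i ∈ Σ_{n+1}` of the longest element of `S_{n+1}`, there exist
words `u, v` over `[n]` with `i ∼ u (n, n-1, …, 1) v`, and words `u', v'` over `[n]`
with `i ∼ u' (1, 2, …, n) v'`. -/
theorem statement0 (n : ℕ) (hn : 1 ≤ n) (i : List ℕ) (hi : IsReduced n i) :
    (∃ u v : List ℕ, (∀ a ∈ u, 1 ≤ a ∧ a ≤ n) ∧ (∀ a ∈ v, 1 ≤ a ∧ a ≤ n) ∧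
      TwoMoveEquiv i (u ++ descWord n ++ v)) ∧
    (∃ u' v' : List ℕ, (∀ a ∈ u', 1 ≤ a ∧ a ≤ n) ∧ (∀ a ∈ v', 1 ≤ a ∧ a ≤ n) ∧
      TwoMoveEquiv i (u' ++ ascWord n ++ v')) := by
  have hilet := hi.2.1
  constructor
  · obtain ⟨u, v, he⟩ := desc_half n i hi
    have hperm := tmequiv_perm he
    refine ⟨u, v, ?_, ?_, he⟩
    · intro a ha
      exact hilet a (hperm.mem_iff.2 (by simp [ha]))
    · intro a ha
      exact hilet a (hperm.mem_iff.2 (by simp [ha]))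
  · set f : ℕ → ℕ := fun a => n + 1 - a with hf
    have hi' : IsReduced n (i.map f) := reflect_reduced n i hi
    obtain ⟨u, v, he⟩ := desc_half n (i.map f) hi'
    have hmap := tmequiv_map_reflect n he hi'.2.1
    rw [map_reflect_invol n i hilet] at hmap
    have hre : (u ++ descWord n ++ v).map f = u.map f ++ ascWord n ++ v.map f := by
      rw [List.map_append, List.map_append, map_reflect_desc]
    rw [hre] at hmap
    have hperm := tmequiv_perm hmap
    refine ⟨u.map f, v.map f, ?_, ?_, hmap⟩
    · intro a ha
      exact hilet a (hperm.mem_iff.2 (by simp [ha]))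
    · intro a ha
      exact hilet a (hperm.mem_iff.2 (by simp [ha]))


end StringPolytope
end
end

section
/- If i, i′ ∈ Σ_{n+1} are 2-move equivalent, then the string cones C_i and C_{i′} are unimodularly equivalent; moreover, for every dominant integral weight λ, the string polytopes Δ_i(λ) and Δ_{i′}(λ) are unimodularly equivalent. -/
open scoped Classical

noncomputable section

namespace StringPolytope

/-! ### Auxiliary lemmas for 2-moves -/

/-- swap the indices `p` and `p+1`. -/
def tau (p j : ℕ) : ℕ := if j = p then p + 1 else if j = p + 1 then p else j

lemma tau_invol (p j : ℕ) : tau p (tau p j) = j := by unfold tau; split_ifs <;> omega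

lemma tau_inj (p : ℕ) : Function.Injective (tau p) :=
  Function.Involutive.injective (tau_invol p)

lemma wordProd_append (l1 l2 : List ℕ) :
    wordProd (l1 ++ l2) = wordProd l1 * wordProd l2 := by
  simp [wordProd, List.prod_append]

lemma sTrans_fix {a x : ℕ} (h1 : x ≠ a) (h2 : x ≠ a + 1) : sTrans a x = x :=
  Equiv.swap_apply_of_ne_of_ne h1 h2

lemma sTrans_comm {a b : ℕ} (h : a + 1 < b ∨ b + 1 < a) :
    sTrans a * sTrans b = sTrans b * sTrans a := by
  ext k
  simp only [sTrans, Equiv.Perm.mul_apply, Equiv.swap_apply_def]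
  split_ifs <;> omega

section TwoMoveStepAux

variable (u v : List ℕ) (a b : ℕ)

lemma lenW : (u ++ a :: b :: v).length = u.length + 2 + v.length := by
  simp; omega

lemma letterW_p : letterAt (u ++ a :: b :: v) (u.length + 1) = a := by
  unfold letterAt
  have h0 : u.length + 1 - 1 = u.length := by omega
  rw [h0, List.getD_append_right u _ 0 u.length le_rfl, Nat.sub_self]
  rfl

lemma letterW_q : letterAt (u ++ a :: b :: v) (u.length + 2) = b := by
  have : (u ++ a :: b :: v).getD (u.length + 1) 0 = b := by
    rw [List.getD_append_right u _ 0 (u.length + 1) (by omega)]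
    simp
  simpa [letterAt] using this

lemma letterW_ne (j : ℕ) (h0 : 1 ≤ j) (h1 : j ≠ u.length + 1) (h2 : j ≠ u.length + 2) :
    letterAt (u ++ a :: b :: v) j = letterAt (u ++ b :: a :: v) j := by
  unfold letterAt
  rcases lt_or_ge (j - 1) u.length with h | h
  · rw [List.getD_append _ _ 0 _ h, List.getD_append _ _ 0 _ h]
  · have h3 : u.length + 2 ≤ j - 1 := by omega
    rw [List.getD_append_right u _ 0 _ h, List.getD_append_right u _ 0 _ h]
    have h4 : 2 ≤ j - 1 - u.length := by omega
    obtain ⟨m, hm⟩ : ∃ m, j - 1 - u.length = m + 2 := ⟨j - 1 - u.length - 2, by omega⟩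
    rw [hm]; simp

lemma letterW_tau (j : ℕ) (h0 : 1 ≤ j) :
    letterAt (u ++ b :: a :: v) j = letterAt (u ++ a :: b :: v) (tau (u.length + 1) j) := by
  rcases eq_or_ne j (u.length + 1) with rfl | h1
  · rw [letterW_p]
    have : tau (u.length + 1) (u.length + 1) = u.length + 2 := by unfold tau; split_ifs <;> omega
    rw [this, letterW_q]
  rcases eq_or_ne j (u.length + 2) with rfl | h2
  · rw [letterW_q]
    have : tau (u.length + 1) (u.length + 2) = u.length + 1 := by unfold tau; split_ifs <;> omega
    rw [this, letterW_p]
  · have : tau (u.length + 1) j = j := by unfold tau; split_ifs <;> omega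
    rw [this, letterW_ne u v b a j h0 h1 h2]

lemma takeW_le (m : ℕ) (h : m ≤ u.length) : (u ++ a :: b :: v).take m = u.take m := by
  rw [List.take_append]
  have : m - u.length = 0 := by omega
  simp [this]

lemma takeW_q1 : (u ++ a :: b :: v).take (u.length + 1) = u ++ [a] := by
  rw [List.take_append]
  have h1 : u.take (u.length + 1) = u := List.take_of_length_le (by omega)
  have h2 : u.length + 1 - u.length = 1 := by omega
  rw [h1, h2]; rfl

lemma takeW_ge (m : ℕ) (h : u.length + 2 ≤ m) :
    (u ++ a :: b :: v).take m = u ++ a :: b :: v.take (m - u.length - 2) := by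
  rw [List.take_append]
  have h1 : u.take m = u := List.take_of_length_le (by omega)
  obtain ⟨c, hc⟩ : ∃ c, m - u.length = c + 2 := ⟨m - u.length - 2, by omega⟩
  have h3 : c = m - u.length - 2 := by omega
  subst h3
  rw [h1, hc]
  simp

lemma wordProd_takeW_ge (hab : a + 1 < b ∨ b + 1 < a) (m : ℕ) (h : u.length + 2 ≤ m) :
    wordProd ((u ++ a :: b :: v).take m) = wordProd ((u ++ b :: a :: v).take m) := by
  rw [takeW_ge u v a b m h, takeW_ge u v b a m h]
  have e1 : (u ++ a :: b :: v.take (m - u.length - 2)) =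
      (u ++ [a] ++ [b]) ++ v.take (m - u.length - 2) := by simp
  have e2 : (u ++ b :: a :: v.take (m - u.length - 2)) =
      (u ++ [b] ++ [a]) ++ v.take (m - u.length - 2) := by simp
  rw [e1, e2, wordProd_append, wordProd_append, wordProd_append, wordProd_append,
    wordProd_append, wordProd_append]
  have hsw : wordProd [a] * wordProd [b] = wordProd [b] * wordProd [a] := by
    simpa [wordProd] using sTrans_comm hab
  congr 1
  rw [mul_assoc, hsw, ← mul_assoc]

lemma stateAboveW_p : stateAbove (u ++ a :: b :: v) (u.length + 1) = wordProd u := by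
  unfold stateAbove
  have : u.length + 1 - 1 = u.length := by omega
  rw [this, takeW_le u v a b u.length le_rfl, List.take_length]

lemma stateAboveW_q :
    stateAbove (u ++ a :: b :: v) (u.length + 2) = wordProd u * sTrans a := by
  unfold stateAbove
  have : u.length + 2 - 1 = u.length + 1 := by omega
  rw [this, takeW_q1, wordProd_append]
  simp [wordProd]

lemma wireXW_p : wireX (u ++ a :: b :: v) (u.length + 1) = wordProd u a := by
  unfold wireX; rw [stateAboveW_p, letterW_p]

lemma wireYW_p : wireY (u ++ a :: b :: v) (u.length + 1) = wordProd u (a + 1) := by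
  unfold wireY; rw [stateAboveW_p, letterW_p]

lemma wireXW_q (hab : a + 1 < b ∨ b + 1 < a) :
    wireX (u ++ a :: b :: v) (u.length + 2) = wordProd u b := by
  unfold wireX; rw [stateAboveW_q, letterW_q]
  have : sTrans a b = b := sTrans_fix (by omega) (by omega)
  simp [Equiv.Perm.mul_apply, this]

lemma wireYW_q (hab : a + 1 < b ∨ b + 1 < a) :
    wireY (u ++ a :: b :: v) (u.length + 2) = wordProd u (b + 1) := by
  unfold wireY; rw [stateAboveW_q, letterW_q]
  have : sTrans a (b + 1) = b + 1 := sTrans_fix (by omega) (by omega)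
  simp [Equiv.Perm.mul_apply, this]

lemma wireXW_ne (hab : a + 1 < b ∨ b + 1 < a) (j : ℕ) (h0 : 1 ≤ j)
    (h1 : j ≠ u.length + 1) (h2 : j ≠ u.length + 2) :
    wireX (u ++ a :: b :: v) j = wireX (u ++ b :: a :: v) j := by
  have hst : stateAbove (u ++ a :: b :: v) j = stateAbove (u ++ b :: a :: v) j := by
    unfold stateAbove
    rcases le_or_gt (j - 1) u.length with h | h
    · rw [takeW_le u v a b _ h, takeW_le u v b a _ h]
    · have : u.length + 2 ≤ j - 1 := by omega
      rw [wordProd_takeW_ge u v a b hab _ this]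
  unfold wireX
  rw [hst, letterW_ne u v a b j h0 h1 h2]

lemma wireYW_ne (hab : a + 1 < b ∨ b + 1 < a) (j : ℕ) (h0 : 1 ≤ j)
    (h1 : j ≠ u.length + 1) (h2 : j ≠ u.length + 2) :
    wireY (u ++ a :: b :: v) j = wireY (u ++ b :: a :: v) j := by
  have hst : stateAbove (u ++ a :: b :: v) j = stateAbove (u ++ b :: a :: v) j := by
    unfold stateAbove
    rcases le_or_gt (j - 1) u.length with h | h
    · rw [takeW_le u v a b _ h, takeW_le u v b a _ h]
    · have : u.length + 2 ≤ j - 1 := by omega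
      rw [wordProd_takeW_ge u v a b hab _ this]
  unfold wireY
  rw [hst, letterW_ne u v a b j h0 h1 h2]

lemma wireXW_tau (hab : a + 1 < b ∨ b + 1 < a) (j : ℕ) (h0 : 1 ≤ j) :
    wireX (u ++ b :: a :: v) j = wireX (u ++ a :: b :: v) (tau (u.length + 1) j) := by
  rcases eq_or_ne j (u.length + 1) with rfl | h1
  · have ht : tau (u.length + 1) (u.length + 1) = u.length + 2 := by
      unfold tau; split_ifs <;> omega
    rw [ht, wireXW_p, wireXW_q u v a b hab]
  rcases eq_or_ne j (u.length + 2) with rfl | h2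
  · have ht : tau (u.length + 1) (u.length + 2) = u.length + 1 := by
      unfold tau; split_ifs <;> omega
    rw [ht, wireXW_q u v b a (by omega), wireXW_p]
  · have ht : tau (u.length + 1) j = j := by unfold tau; split_ifs <;> omega
    rw [ht, ← wireXW_ne u v a b hab j h0 h1 h2]

lemma wireYW_tau (hab : a + 1 < b ∨ b + 1 < a) (j : ℕ) (h0 : 1 ≤ j) :
    wireY (u ++ b :: a :: v) j = wireY (u ++ a :: b :: v) (tau (u.length + 1) j) := by
  rcases eq_or_ne j (u.length + 1) with rfl | h1
  · have ht : tau (u.length + 1) (u.length + 1) = u.length + 2 := by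
      unfold tau; split_ifs <;> omega
    rw [ht, wireYW_p, wireYW_q u v a b hab]
  rcases eq_or_ne j (u.length + 2) with rfl | h2
  · have ht : tau (u.length + 1) (u.length + 2) = u.length + 1 := by
      unfold tau; split_ifs <;> omega
    rw [ht, wireYW_q u v b a (by omega), wireYW_p]
  · have ht : tau (u.length + 1) j = j := by unfold tau; split_ifs <;> omega
    rw [ht, ← wireYW_ne u v a b hab j h0 h1 h2]

end TwoMoveStepAux

lemma tau_range (L len j : ℕ) (h : L + 2 ≤ len) :
    (1 ≤ tau (L + 1) j ∧ tau (L + 1) j ≤ len) ↔ (1 ≤ j ∧ j ≤ len) := by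
  unfold tau; split_ifs <;> omega

section TwoMoveStepAux2

variable (u v : List ℕ) (a b : ℕ)

lemma nodeW_tau (hab : a + 1 < b ∨ b + 1 < a) (j : ℕ) (h0 : 1 ≤ j) (r : ℕ) :
    NodeOnWire (u ++ b :: a :: v) j r ↔
      NodeOnWire (u ++ a :: b :: v) (tau (u.length + 1) j) r := by
  unfold NodeOnWire
  rw [wireXW_tau u v a b hab j h0, wireYW_tau u v a b hab j h0]

lemma otherW_tau (hab : a + 1 < b ∨ b + 1 < a) (j : ℕ) (h0 : 1 ≤ j) (r : ℕ) :
    otherWire (u ++ b :: a :: v) j r = otherWire (u ++ a :: b :: v) (tau (u.length + 1) j) r := by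
  unfold otherWire
  rw [wireXW_tau u v a b hab j h0, wireYW_tau u v a b hab j h0]

lemma forbW_tau (hab : a + 1 < b ∨ b + 1 < a) (k j r : ℕ) (h0 : 1 ≤ j) :
    Forbidden (u ++ b :: a :: v) k j r ↔
      Forbidden (u ++ a :: b :: v) k (tau (u.length + 1) j) r := by
  unfold Forbidden
  rw [otherW_tau u v a b hab j h0 r]

lemma validW_tau (j : ℕ) :
    ValidNode (u ++ b :: a :: v) j ↔ ValidNode (u ++ a :: b :: v) (tau (u.length + 1) j) := by
  unfold ValidNode
  rw [lenW u v b a, lenW u v a b]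
  exact (tau_range u.length (u.length + 2 + v.length) j (by omega)).symm

lemma nodes_pq_disj (hab : a + 1 < b ∨ b + 1 < a) (r : ℕ) :
    ¬(NodeOnWire (u ++ a :: b :: v) (u.length + 1) r ∧
      NodeOnWire (u ++ a :: b :: v) (u.length + 2) r) := by
  rintro ⟨h1, h2⟩
  unfold NodeOnWire at h1 h2
  rw [wireXW_p, wireYW_p] at h1
  rw [wireXW_q u v a b hab, wireYW_q u v a b hab] at h2
  have inj := (wordProd u).injective
  rcases h1 with h1 | h1 <;> rcases h2 with h2 | h2 <;>
    · have := inj (h1.trans h2.symm); omega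

lemma ordW (hab : a + 1 < b ∨ b + 1 < a) {r x y : ℕ}
    (hx : NodeOnWire (u ++ a :: b :: v) x r) (hy : NodeOnWire (u ++ a :: b :: v) y r) :
    tau (u.length + 1) x < tau (u.length + 1) y ↔ x < y := by
  have h1 : x ≠ u.length + 1 ∨ y ≠ u.length + 2 := by
    by_contra hc; push_neg at hc
    obtain ⟨rfl, rfl⟩ := hc
    exact nodes_pq_disj u v a b hab r ⟨hx, hy⟩
  have h2 : x ≠ u.length + 2 ∨ y ≠ u.length + 1 := by
    by_contra hc; push_neg at hc
    obtain ⟨rfl, rfl⟩ := hc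
    exact nodes_pq_disj u v a b hab r ⟨hy, hx⟩
  unfold tau; split_ifs <;> omega

end TwoMoveStepAux2

lemma mem_nodesOn {w : List ℕ} {r j : ℕ} :
    j ∈ nodesOn w r ↔ (1 ≤ j ∧ j ≤ w.length) ∧ NodeOnWire w j r := by
  simp only [nodesOn, List.mem_filter, List.mem_map, List.mem_range, decide_eq_true_eq]
  constructor
  · rintro ⟨⟨i, hi, rfl⟩, h⟩; exact ⟨⟨by omega, by omega⟩, h⟩
  · rintro ⟨⟨h1, h2⟩, h3⟩; exact ⟨⟨j - 1, by omega, by omega⟩, h3⟩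

lemma nodesOn_nodup (w : List ℕ) (r : ℕ) : (nodesOn w r).Nodup := by
  apply List.Nodup.filter
  exact List.nodup_range.map (fun x y => by omega)

lemma mem_tailList {w : List ℕ} {r c j : ℕ} :
    j ∈ tailList w r c ↔ j ∈ nodesOn w r ∧ c < j := by
  simp [tailList, List.mem_filter]

lemma mem_segList {w : List ℕ} {r c d j : ℕ} :
    j ∈ segList w r c d ↔ j ∈ nodesOn w r ∧ (min c d < j ∧ j < max c d) := by
  simp [segList, List.mem_filter]

lemma nodeOn_of_mem {w : List ℕ} {r j : ℕ} (h : j ∈ nodesOn w r) : NodeOnWire w j r :=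
  (mem_nodesOn.mp h).2

lemma pos_of_mem_nodesOn {w : List ℕ} {r j : ℕ} (h : j ∈ nodesOn w r) : 1 ≤ j :=
  (mem_nodesOn.mp h).1.1

lemma nodeOn_other (w : List ℕ) (j r : ℕ) : NodeOnWire w j (otherWire w j r) := by
  unfold otherWire NodeOnWire
  split_ifs with h
  exacts [Or.inr rfl, Or.inl rfl]

section TwoMoveStepAux3

variable (u v : List ℕ) (a b : ℕ)

lemma memNodes_tau (hab : a + 1 < b ∨ b + 1 < a) (j r : ℕ) :
    j ∈ nodesOn (u ++ b :: a :: v) r ↔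
      tau (u.length + 1) j ∈ nodesOn (u ++ a :: b :: v) r := by
  rw [mem_nodesOn, mem_nodesOn, lenW u v b a, lenW u v a b]
  have hr := tau_range u.length (u.length + 2 + v.length) j (by omega)
  constructor
  · rintro ⟨⟨h1, h2⟩, h3⟩
    exact ⟨hr.mpr ⟨h1, h2⟩, (nodeW_tau u v a b hab j h1 r).mp h3⟩
  · rintro ⟨⟨h1, h2⟩, h3⟩
    have hb := hr.mp ⟨h1, h2⟩
    exact ⟨hb, (nodeW_tau u v a b hab j hb.1 r).mpr h3⟩

lemma mem_tail_tau (hab : a + 1 < b ∨ b + 1 < a) {r c : ℕ}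
    (hc : NodeOnWire (u ++ a :: b :: v) c r) (j : ℕ) :
    j ∈ tailList (u ++ b :: a :: v) r (tau (u.length + 1) c) ↔
      tau (u.length + 1) j ∈ tailList (u ++ a :: b :: v) r c := by
  rw [mem_tailList, mem_tailList, memNodes_tau u v a b hab j r]
  constructor
  · rintro ⟨h1, h2⟩
    refine ⟨h1, ?_⟩
    have hjw := nodeOn_of_mem h1
    have h3 : tau (u.length + 1) c < tau (u.length + 1) (tau (u.length + 1) j) := by
      rwa [tau_invol]
    exact (ordW u v a b hab hc hjw).mp h3
  · rintro ⟨h1, h2⟩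
    refine ⟨h1, ?_⟩
    have := (ordW u v a b hab hc (nodeOn_of_mem h1)).mpr h2
    rwa [tau_invol] at this

lemma mem_seg_tau (hab : a + 1 < b ∨ b + 1 < a) {r c d : ℕ}
    (hc : NodeOnWire (u ++ a :: b :: v) c r) (hd : NodeOnWire (u ++ a :: b :: v) d r) (j : ℕ) :
    j ∈ segList (u ++ b :: a :: v) r (tau (u.length + 1) c) (tau (u.length + 1) d) ↔
      tau (u.length + 1) j ∈ segList (u ++ a :: b :: v) r c d := by
  rw [mem_segList, mem_segList, memNodes_tau u v a b hab j r]
  constructor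
  · rintro ⟨h1, h2, h3⟩
    refine ⟨h1, ?_, ?_⟩
    · rw [min_lt_iff] at h2 ⊢
      rcases h2 with h2 | h2
      · exact Or.inl ((ordW u v a b hab hc (nodeOn_of_mem h1)).mp (by rwa [tau_invol]))
      · exact Or.inr ((ordW u v a b hab hd (nodeOn_of_mem h1)).mp (by rwa [tau_invol]))
    · rw [lt_max_iff] at h3 ⊢
      rcases h3 with h3 | h3
      · exact Or.inl ((ordW u v a b hab (nodeOn_of_mem h1) hc).mp (by rwa [tau_invol]))
      · exact Or.inr ((ordW u v a b hab (nodeOn_of_mem h1) hd).mp (by rwa [tau_invol]))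
  · rintro ⟨h1, h2, h3⟩
    refine ⟨h1, ?_, ?_⟩
    · rw [min_lt_iff] at h2 ⊢
      rcases h2 with h2 | h2
      · refine Or.inl ?_
        have := (ordW u v a b hab hc (nodeOn_of_mem h1)).mpr h2
        rwa [tau_invol] at this
      · refine Or.inr ?_
        have := (ordW u v a b hab hd (nodeOn_of_mem h1)).mpr h2
        rwa [tau_invol] at this
    · rw [lt_max_iff] at h3 ⊢
      rcases h3 with h3 | h3
      · refine Or.inl ?_
        have := (ordW u v a b hab (nodeOn_of_mem h1) hc).mpr h3
        rwa [tau_invol] at this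
      · refine Or.inr ?_
        have := (ordW u v a b hab (nodeOn_of_mem h1) hd).mpr h3
        rwa [tau_invol] at this

lemma tailForb_tau (hab : a + 1 < b ∨ b + 1 < a) {k r c : ℕ}
    (hc : NodeOnWire (u ++ a :: b :: v) c r) :
    (∀ j ∈ tailList (u ++ b :: a :: v) r (tau (u.length + 1) c),
        ¬ Forbidden (u ++ b :: a :: v) k j r) ↔
      (∀ j ∈ tailList (u ++ a :: b :: v) r c, ¬ Forbidden (u ++ a :: b :: v) k j r) := by
  constructor
  · intro H j hj
    have hmem : tau (u.length + 1) j ∈ tailList (u ++ b :: a :: v) r (tau (u.length + 1) c) :=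
      (mem_tail_tau u v a b hab hc _).mpr (by rwa [tau_invol])
    have hF := H _ hmem
    have hpos : 1 ≤ tau (u.length + 1) j :=
      pos_of_mem_nodesOn (mem_tailList.mp hmem).1
    rw [forbW_tau u v a b hab k _ r hpos, tau_invol] at hF
    exact hF
  · intro H j hj
    have h2 := (mem_tail_tau u v a b hab hc j).mp hj
    have hpos : 1 ≤ j := pos_of_mem_nodesOn (mem_tailList.mp hj).1
    rw [forbW_tau u v a b hab k j r hpos]
    exact H _ h2

lemma segForb_tau (hab : a + 1 < b ∨ b + 1 < a) {k r c d : ℕ}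
    (hc : NodeOnWire (u ++ a :: b :: v) c r) (hd : NodeOnWire (u ++ a :: b :: v) d r) :
    (∀ j ∈ segList (u ++ b :: a :: v) r (tau (u.length + 1) c) (tau (u.length + 1) d),
        ¬ Forbidden (u ++ b :: a :: v) k j r) ↔
      (∀ j ∈ segList (u ++ a :: b :: v) r c d, ¬ Forbidden (u ++ a :: b :: v) k j r) := by
  constructor
  · intro H j hj
    have hmem : tau (u.length + 1) j ∈
        segList (u ++ b :: a :: v) r (tau (u.length + 1) c) (tau (u.length + 1) d) :=
      (mem_seg_tau u v a b hab hc hd _).mpr (by rwa [tau_invol])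
    have hF := H _ hmem
    have hpos : 1 ≤ tau (u.length + 1) j :=
      pos_of_mem_nodesOn (mem_segList.mp hmem).1
    rw [forbW_tau u v a b hab k _ r hpos, tau_invol] at hF
    exact hF
  · intro H j hj
    have h2 := (mem_seg_tau u v a b hab hc hd j).mp hj
    have hpos : 1 ≤ j := pos_of_mem_nodesOn (mem_segList.mp hj).1
    rw [forbW_tau u v a b hab k j r hpos]
    exact H _ h2

end TwoMoveStepAux3

lemma tau_pos (L j : ℕ) (h : 1 ≤ j) : 1 ≤ tau (L + 1) j := by
  unfold tau; split_ifs <;> omega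

section TwoMoveStepAux4

variable (u v : List ℕ) (a b : ℕ)

lemma perm_tail_tau (hab : a + 1 < b ∨ b + 1 < a) {r c : ℕ}
    (hc : NodeOnWire (u ++ a :: b :: v) c r) :
    List.Perm (tailList (u ++ b :: a :: v) r (tau (u.length + 1) c))
      ((tailList (u ++ a :: b :: v) r c).map (tau (u.length + 1))) := by
  refine (List.perm_ext_iff_of_nodup ?_ ?_).mpr ?_
  · exact (nodesOn_nodup _ _).filter _
  · exact ((nodesOn_nodup _ _).filter _).map (tau_inj _)
  · intro x
    rw [List.mem_map]
    constructor
    · intro hx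
      exact ⟨tau (u.length + 1) x, (mem_tail_tau u v a b hab hc x).mp hx, tau_invol _ _⟩
    · rintro ⟨y, hy, rfl⟩
      exact (mem_tail_tau u v a b hab hc _).mpr (by rwa [tau_invol])

lemma perm_seg_tau (hab : a + 1 < b ∨ b + 1 < a) {r c d : ℕ}
    (hc : NodeOnWire (u ++ a :: b :: v) c r) (hd : NodeOnWire (u ++ a :: b :: v) d r) :
    List.Perm (segList (u ++ b :: a :: v) r (tau (u.length + 1) c) (tau (u.length + 1) d))
      ((segList (u ++ a :: b :: v) r c d).map (tau (u.length + 1))) := by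
  refine (List.perm_ext_iff_of_nodup ?_ ?_).mpr ?_
  · exact (nodesOn_nodup _ _).filter _
  · exact ((nodesOn_nodup _ _).filter _).map (tau_inj _)
  · intro x
    rw [List.mem_map]
    constructor
    · intro hx
      exact ⟨tau (u.length + 1) x, (mem_seg_tau u v a b hab hc hd x).mp hx, tau_invol _ _⟩
    · rintro ⟨y, hy, rfl⟩
      exact (mem_seg_tau u v a b hab hc hd _).mpr (by rwa [tau_invol])

lemma travel_iff (hab : a + 1 < b ∨ b + 1 < a) (k : ℕ) :
    ∀ (ms : List ℕ) (r c : ℕ), NodeOnWire (u ++ a :: b :: v) c r →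
      (TravelOK (u ++ b :: a :: v) k r (tau (u.length + 1) c) (ms.map (tau (u.length + 1))) ↔
        TravelOK (u ++ a :: b :: v) k r c ms) := by
  intro ms
  induction ms with
  | nil =>
    intro r c hc
    simp only [List.map_nil, TravelOK]
    exact and_congr Iff.rfl (tailForb_tau u v a b hab hc)
  | cons m rest ih =>
    intro r c hc
    simp only [List.map_cons, TravelOK]
    constructor
    · rintro ⟨h1, h2, h3, h4, h5⟩
      have hv : ValidNode (u ++ a :: b :: v) m := by
        have := (validW_tau u v a b (tau (u.length + 1) m)).mp h1
        rwa [tau_invol] at this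
      have hm1 : 1 ≤ m := hv.1
      have hm : NodeOnWire (u ++ a :: b :: v) m r := by
        have := (nodeW_tau u v a b hab (tau (u.length + 1) m) (tau_pos _ _ hm1) r).mp h2
        rwa [tau_invol] at this
      have h3' : if r ≤ k then m < c else c < m := by
        by_cases hrk : r ≤ k
        · rw [if_pos hrk] at h3 ⊢; exact (ordW u v a b hab hm hc).mp h3
        · rw [if_neg hrk] at h3 ⊢; exact (ordW u v a b hab hc hm).mp h3
      have h4' := (segForb_tau u v a b hab hc hm).mp h4
      rw [otherW_tau u v a b hab (tau (u.length + 1) m) (tau_pos _ _ hm1) r,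
        tau_invol] at h5
      exact ⟨hv, hm, h3', h4', (ih _ m (nodeOn_other _ m r)).mp h5⟩
    · rintro ⟨h1, h2, h3, h4, h5⟩
      have hm1 : 1 ≤ m := h1.1
      refine ⟨?_, ?_, ?_, ?_, ?_⟩
      · rw [validW_tau u v a b (tau (u.length + 1) m), tau_invol]; exact h1
      · rw [nodeW_tau u v a b hab (tau (u.length + 1) m) (tau_pos _ _ hm1) r, tau_invol]
        exact h2
      · by_cases hrk : r ≤ k
        · rw [if_pos hrk] at h3 ⊢; exact (ordW u v a b hab h2 hc).mpr h3
        · rw [if_neg hrk] at h3 ⊢; exact (ordW u v a b hab hc h2).mpr h3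
      · exact (segForb_tau u v a b hab hc h2).mpr h4
      · rw [otherW_tau u v a b hab (tau (u.length + 1) m) (tau_pos _ _ hm1) r, tau_invol]
        exact (ih _ m (nodeOn_other _ m r)).mpr h5

lemma visitTail_perm (hab : a + 1 < b ∨ b + 1 < a) (k : ℕ) :
    ∀ (ms : List ℕ) (r c : ℕ), NodeOnWire (u ++ a :: b :: v) c r →
      TravelOK (u ++ a :: b :: v) k r c ms →
      List.Perm
        (visitTail (u ++ b :: a :: v) r (tau (u.length + 1) c) (ms.map (tau (u.length + 1))))
        ((visitTail (u ++ a :: b :: v) r c ms).map (tau (u.length + 1))) := by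
  intro ms
  induction ms with
  | nil =>
    intro r c hc _
    simp only [List.map_nil, visitTail]
    exact perm_tail_tau u v a b hab hc
  | cons m rest ih =>
    rintro r c hc ⟨h1, h2, h3, h4, h5⟩
    have hm1 : 1 ≤ m := h1.1
    simp only [List.map_cons, visitTail, List.map_append]
    rw [otherW_tau u v a b hab (tau (u.length + 1) m) (tau_pos _ _ hm1) r, tau_invol]
    exact (perm_seg_tau u v a b hab hc h2).append
      ((ih _ m (nodeOn_other _ m r) h5).cons (tau (u.length + 1) m))

lemma visitList_perm (hab : a + 1 < b ∨ b + 1 < a) (k m : ℕ) (rest : List ℕ)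
    (hm1 : 1 ≤ m) (hm : NodeOnWire (u ++ a :: b :: v) m k)
    (htr : TravelOK (u ++ a :: b :: v) k (otherWire (u ++ a :: b :: v) m k) m rest) :
    List.Perm (visitList (u ++ b :: a :: v) k ((m :: rest).map (tau (u.length + 1))))
      ((visitList (u ++ a :: b :: v) k (m :: rest)).map (tau (u.length + 1))) := by
  simp only [List.map_cons, visitList, List.map_append]
  rw [otherW_tau u v a b hab (tau (u.length + 1) m) (tau_pos _ _ hm1) k, tau_invol]
  exact (perm_tail_tau u v a b hab hm).append
    ((visitTail_perm u v a b hab k rest _ m (nodeOn_other _ m k) htr).cons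
      (tau (u.length + 1) m))

lemma isGP_iff (hab : a + 1 < b ∨ b + 1 < a) (n k : ℕ) (ms : List ℕ) :
    IsGPPath n (u ++ b :: a :: v) k (ms.map (tau (u.length + 1))) ↔
      IsGPPath n (u ++ a :: b :: v) k ms := by
  cases ms with
  | nil =>
    constructor <;> rintro ⟨-, -, h, -⟩ <;> exact h.elim
  | cons m rest =>
    simp only [IsGPPath, List.map_cons]
    constructor
    · rintro ⟨hk1, hk2, ⟨h1, h2, h3, h4⟩, h5⟩
      have hv : ValidNode (u ++ a :: b :: v) m := by
        have := (validW_tau u v a b (tau (u.length + 1) m)).mp h1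
        rwa [tau_invol] at this
      have hm1 : 1 ≤ m := hv.1
      have hm : NodeOnWire (u ++ a :: b :: v) m k := by
        have := (nodeW_tau u v a b hab (tau (u.length + 1) m) (tau_pos _ _ hm1) k).mp h2
        rwa [tau_invol] at this
      have h3' := (tailForb_tau u v a b hab hm).mp h3
      rw [otherW_tau u v a b hab (tau (u.length + 1) m) (tau_pos _ _ hm1) k,
        tau_invol] at h4
      have h4' := (travel_iff u v a b hab k rest _ m (nodeOn_other _ m k)).mp h4
      have hperm := visitList_perm u v a b hab k m rest hm1 hm h4'
      refine ⟨hk1, hk2, ⟨hv, hm, h3', h4'⟩, ?_⟩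
      exact ((hperm.nodup_iff).mp h5).of_map _
    · rintro ⟨hk1, hk2, ⟨h1, h2, h3, h4⟩, h5⟩
      have hm1 : 1 ≤ m := h1.1
      have hperm := visitList_perm u v a b hab k m rest hm1 h2 h4
      refine ⟨hk1, hk2, ⟨?_, ?_, ?_, ?_⟩, ?_⟩
      · rw [validW_tau u v a b (tau (u.length + 1) m), tau_invol]; exact h1
      · rw [nodeW_tau u v a b hab (tau (u.length + 1) m) (tau_pos _ _ hm1) k, tau_invol]
        exact h2
      · exact (tailForb_tau u v a b hab h2).mpr h3
      · rw [otherW_tau u v a b hab (tau (u.length + 1) m) (tau_pos _ _ hm1) k, tau_invol]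
        exact (travel_iff u v a b hab k rest _ m (nodeOn_other _ m k)).mpr h4
      · exact (hperm.nodup_iff).mpr (h5.map (tau_inj _))

lemma travel_pos (w : List ℕ) (k : ℕ) :
    ∀ (ms : List ℕ) (r c : ℕ), TravelOK w k r c ms → ∀ x ∈ ms, 1 ≤ x := by
  intro ms
  induction ms with
  | nil => intro r c _ x hx; exact absurd hx List.not_mem_nil
  | cons m rest ih =>
    rintro r c ⟨h1, -, -, -, h5⟩ x hx
    rcases List.mem_cons.mp hx with rfl | hx
    · exact h1.1
    · exact ih _ m h5 x hx

lemma switches_map (hab : a + 1 < b ∨ b + 1 < a) :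
    ∀ (ms : List ℕ) (r : ℕ), (∀ x ∈ ms, 1 ≤ x) →
      pathSwitches (u ++ b :: a :: v) r (ms.map (tau (u.length + 1))) =
        (pathSwitches (u ++ a :: b :: v) r ms).map
          (fun e => (tau (u.length + 1) e.1, e.2)) := by
  intro ms
  induction ms with
  | nil => intro r _; rfl
  | cons m rest ih =>
    intro r hpos
    have hm1 : 1 ≤ m := hpos m List.mem_cons_self
    simp only [List.map_cons, pathSwitches]
    rw [otherW_tau u v a b hab (tau (u.length + 1) m) (tau_pos _ _ hm1) r, tau_invol]
    rw [ih _ (fun x hx => hpos x (List.mem_cons_of_mem m hx))]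

lemma coeff_tau (hab : a + 1 < b ∨ b + 1 < a) (k : ℕ) (ms : List ℕ)
    (hpos : ∀ x ∈ ms, 1 ≤ x) (j : ℕ) :
    coeff (u ++ b :: a :: v) k (ms.map (tau (u.length + 1))) j =
      coeff (u ++ a :: b :: v) k ms (tau (u.length + 1) j) := by
  unfold coeff
  rw [switches_map u v a b hab ms k hpos, List.map_map]
  congr 1
  apply List.map_congr_left
  intro e _
  simp only [Function.comp_apply]
  by_cases h : e.1 = tau (u.length + 1) j
  · rw [if_pos (by rw [h, tau_invol]), if_pos h]
  · rw [if_neg (fun hc => h (by rw [← hc, tau_invol])), if_neg h]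

end TwoMoveStepAux4

/-- the coordinate swap on `Fin (Dim n)`. -/
def sigmaF (n L : ℕ) (h : L + 1 < Dim n) : Equiv.Perm (Fin (Dim n)) :=
  Equiv.swap ⟨L, by omega⟩ ⟨L + 1, h⟩

lemma sigmaF_invol (n L : ℕ) (h : L + 1 < Dim n) (j : Fin (Dim n)) :
    sigmaF n L h (sigmaF n L h j) = j := Equiv.swap_apply_self _ _ _

lemma sigmaF_spec (n L : ℕ) (h : L + 1 < Dim n) (j : Fin (Dim n)) :
    ((sigmaF n L h j : Fin (Dim n)) : ℕ) + 1 = tau (L + 1) ((j : ℕ) + 1) := by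
  unfold sigmaF
  by_cases h1 : j = ⟨L, by omega⟩
  · subst h1
    rw [Equiv.swap_apply_left]
    show L + 1 + 1 = tau (L + 1) (L + 1)
    unfold tau; split_ifs <;> omega
  by_cases h2 : j = ⟨L + 1, h⟩
  · subst h2
    rw [Equiv.swap_apply_right]
    show L + 1 = tau (L + 1) (L + 1 + 1)
    unfold tau; split_ifs <;> omega
  · rw [Equiv.swap_apply_of_ne_of_ne h1 h2]
    have e1 : (j : ℕ) ≠ L := fun hc => h1 (Fin.ext hc)
    have e2 : (j : ℕ) ≠ L + 1 := fun hc => h2 (Fin.ext hc)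
    unfold tau; split_ifs <;> omega

lemma image_invol {α : Type*} {Φ : α → α} (hΦ : ∀ x, Φ (Φ x) = x) {A B : Set α}
    (h : ∀ x, Φ x ∈ B ↔ x ∈ A) : B = Φ '' A := by
  ext x
  constructor
  · intro hx; exact ⟨Φ x, (h (Φ x)).mp (by rwa [hΦ]), hΦ x⟩
  · rintro ⟨y, hy, rfl⟩; exact (h y).mpr hy

lemma gp_pos {n : ℕ} {w : List ℕ} {k : ℕ} {ms : List ℕ} (h : IsGPPath n w k ms) :
    ∀ x ∈ ms, 1 ≤ x := by
  cases ms with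
  | nil => intro x hx; exact absurd hx List.not_mem_nil
  | cons m rest =>
    obtain ⟨-, -, ⟨h1, -, -, h4⟩, -⟩ := h
    intro x hx
    rcases List.mem_cons.mp hx with rfl | hx
    · exact h1.1
    · exact travel_pos w k rest _ m h4 x hx

section TwoMoveStepAux5

variable (u v : List ℕ) (a b : ℕ)

lemma stringIneq_tau (hab : a + 1 < b ∨ b + 1 < a) (n : ℕ) (hL : u.length + 1 < Dim n)
    (k : ℕ) (ms : List ℕ) (hpos : ∀ x ∈ ms, 1 ≤ x) (t : Fin (Dim n) → ℝ) :
    stringIneq n (u ++ b :: a :: v) (k, ms.map (tau (u.length + 1)))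
        (fun j => t (sigmaF n u.length hL j)) =
      stringIneq n (u ++ a :: b :: v) (k, ms) t := by
  unfold stringIneq normalVec
  have h1 : ∀ j : Fin (Dim n),
      coeff (u ++ b :: a :: v) k (ms.map (tau (u.length + 1))) ((j : ℕ) + 1) *
          t (sigmaF n u.length hL j) =
        (fun i : Fin (Dim n) => coeff (u ++ a :: b :: v) k ms ((i : ℕ) + 1) * t i)
          (sigmaF n u.length hL j) := by
    intro j
    rw [coeff_tau u v a b hab k ms hpos, ← sigmaF_spec n u.length hL j]
  calc ∑ j : Fin (Dim n), coeff (u ++ b :: a :: v) k (ms.map (tau (u.length + 1)))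
        ((j : ℕ) + 1) * (fun i => t (sigmaF n u.length hL i)) j
      = ∑ j : Fin (Dim n), (fun i : Fin (Dim n) =>
          coeff (u ++ a :: b :: v) k ms ((i : ℕ) + 1) * t i) (sigmaF n u.length hL j) :=
        Finset.sum_congr rfl (fun j _ => h1 j)
    _ = ∑ j : Fin (Dim n), coeff (u ++ a :: b :: v) k ms ((j : ℕ) + 1) * t j :=
        Equiv.sum_comp (sigmaF n u.length hL)
          (fun i : Fin (Dim n) => coeff (u ++ a :: b :: v) k ms ((i : ℕ) + 1) * t i)

lemma map_tau_map_tau (p : ℕ) (l : List ℕ) : (l.map (tau p)).map (tau p) = l := by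
  rw [List.map_map]
  have : tau p ∘ tau p = id := funext (tau_invol p)
  rw [this, List.map_id]

lemma stringCone_tau (hab : a + 1 < b ∨ b + 1 < a) (n : ℕ) (hL : u.length + 1 < Dim n) :
    stringCone n (u ++ b :: a :: v) =
      (fun (t : Fin (Dim n) → ℝ) j => t (sigmaF n u.length hL j)) ''
        stringCone n (u ++ a :: b :: v) := by
  apply image_invol (fun t => funext fun j => by
    show t (sigmaF n u.length hL (sigmaF n u.length hL j)) = t j
    rw [sigmaF_invol])
  intro t
  constructor
  · intro hΦ p hp
    obtain ⟨k, ms⟩ := p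
    have hgp' : IsGPPath n (u ++ b :: a :: v) k (ms.map (tau (u.length + 1))) :=
      (isGP_iff u v a b hab n k ms).mpr hp
    have := hΦ (k, ms.map (tau (u.length + 1))) hgp'
    rwa [stringIneq_tau u v a b hab n hL k ms (gp_pos hp) t] at this
  · intro ht p hp
    obtain ⟨k, ms'⟩ := p
    have hms : (ms'.map (tau (u.length + 1))).map (tau (u.length + 1)) = ms' :=
      map_tau_map_tau _ _
    have hgp : IsGPPath n (u ++ a :: b :: v) k (ms'.map (tau (u.length + 1))) := by
      apply (isGP_iff u v a b hab n k (ms'.map (tau (u.length + 1)))).mp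
      rwa [hms]
    have h0 := ht (k, ms'.map (tau (u.length + 1))) hgp
    rw [← stringIneq_tau u v a b hab n hL k (ms'.map (tau (u.length + 1)))
      (gp_pos hgp) t] at h0
    rwa [hms] at h0

end TwoMoveStepAux5

section TwoMoveStepAux6

variable (u v : List ℕ) (a b : ℕ)

lemma lamCoeff_pq_zero (hab : a + 1 < b ∨ b + 1 < a) :
    lamCoeff (u ++ a :: b :: v) (u.length + 1) (u.length + 2) = 0 := by
  unfold lamCoeff
  rw [letterW_q, letterW_p, if_neg (by omega), if_neg (by omega)]

lemma lamCoeff_qp_zero (hab : a + 1 < b ∨ b + 1 < a) :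
    lamCoeff (u ++ a :: b :: v) (u.length + 2) (u.length + 1) = 0 := by
  unfold lamCoeff
  rw [letterW_q, letterW_p, if_neg (by omega), if_neg (by omega)]

lemma lamCoeffW_tau (hab : a + 1 < b ∨ b + 1 < a) (x y : ℕ) (hx : 1 ≤ x) (hy : 1 ≤ y) :
    lamCoeff (u ++ b :: a :: v) x y =
      lamCoeff (u ++ a :: b :: v) (tau (u.length + 1) x) (tau (u.length + 1) y) := by
  unfold lamCoeff
  rw [letterW_tau u v a b x hx, letterW_tau u v a b y hy]

lemma lamTerm_nat (hab : a + 1 < b ∨ b + 1 < a) (x y : ℕ) :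
    (if x < tau (u.length + 1) y then
        lamCoeff (u ++ a :: b :: v) (tau (u.length + 1) x) y else 0) =
      (if tau (u.length + 1) x < y then
        lamCoeff (u ++ a :: b :: v) (tau (u.length + 1) x) y else 0) := by
  by_cases hx1 : x = u.length + 1
  · subst hx1
    have ht1 : tau (u.length + 1) (u.length + 1) = u.length + 2 := by
      unfold tau; split_ifs <;> omega
    rw [ht1]
    by_cases hy1 : y = u.length + 1
    · subst hy1
      rw [ht1, if_pos (by omega), if_neg (by omega)]
      exact lamCoeff_qp_zero u v a b hab
    by_cases hy2 : y = u.length + 2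
    · subst hy2
      have ht2 : tau (u.length + 1) (u.length + 2) = u.length + 1 := by
        unfold tau; split_ifs <;> omega
      rw [ht2, if_neg (by omega), if_neg (by omega)]
    · have hty : tau (u.length + 1) y = y := by unfold tau; split_ifs <;> omega
      rw [hty, if_congr (by omega : (u.length + 1 < y) ↔ (u.length + 2 < y)) rfl rfl]
  by_cases hx2 : x = u.length + 2
  · subst hx2
    have ht2 : tau (u.length + 1) (u.length + 2) = u.length + 1 := by
      unfold tau; split_ifs <;> omega
    rw [ht2]
    by_cases hy1 : y = u.length + 1
    · subst hy1
      have ht1 : tau (u.length + 1) (u.length + 1) = u.length + 2 := by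
        unfold tau; split_ifs <;> omega
      rw [ht1, if_neg (by omega), if_neg (by omega)]
    by_cases hy2 : y = u.length + 2
    · subst hy2
      have ht2' : tau (u.length + 1) (u.length + 2) = u.length + 1 := by
        unfold tau; split_ifs <;> omega
      rw [ht2', if_neg (by omega), if_pos (by omega)]
      exact (lamCoeff_pq_zero u v a b hab).symm
    · have hty : tau (u.length + 1) y = y := by unfold tau; split_ifs <;> omega
      rw [hty, if_congr (by omega : (u.length + 2 < y) ↔ (u.length + 1 < y)) rfl rfl]
  · have htx : tau (u.length + 1) x = x := by unfold tau; split_ifs <;> omega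
    rw [htx]
    by_cases hy1 : y = u.length + 1
    · subst hy1
      have ht1 : tau (u.length + 1) (u.length + 1) = u.length + 2 := by
        unfold tau; split_ifs <;> omega
      rw [ht1, if_congr (by omega : (x < u.length + 2) ↔ (x < u.length + 1)) rfl rfl]
    by_cases hy2 : y = u.length + 2
    · subst hy2
      have ht2 : tau (u.length + 1) (u.length + 2) = u.length + 1 := by
        unfold tau; split_ifs <;> omega
      rw [ht2, if_congr (by omega : (x < u.length + 1) ↔ (x < u.length + 2)) rfl rfl]
    · have hty : tau (u.length + 1) y = y := by unfold tau; split_ifs <;> omega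
      rw [hty]

lemma lamIneq_tau (hab : a + 1 < b ∨ b + 1 < a) (n : ℕ) (hL : u.length + 1 < Dim n)
    (lam : ℕ → ℤ) (j : Fin (Dim n)) (t : Fin (Dim n) → ℝ) :
    LamIneq n (u ++ b :: a :: v) lam j (fun i => t (sigmaF n u.length hL i)) ↔
      LamIneq n (u ++ a :: b :: v) lam (sigmaF n u.length hL j) t := by
  unfold LamIneq
  have hconst : letterAt (u ++ b :: a :: v) ((j : ℕ) + 1) =
      letterAt (u ++ a :: b :: v) (((sigmaF n u.length hL j : Fin (Dim n)) : ℕ) + 1) := by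
    rw [letterW_tau u v a b ((j : ℕ) + 1) (by omega), ← sigmaF_spec n u.length hL j]
  have hsum : ∑ k : Fin (Dim n),
      (if (j : ℕ) < (k : ℕ) then
        lamCoeff (u ++ b :: a :: v) ((j : ℕ) + 1) ((k : ℕ) + 1) else 0) *
        (fun i => t (sigmaF n u.length hL i)) k =
      ∑ k : Fin (Dim n),
      (if ((sigmaF n u.length hL j : Fin (Dim n)) : ℕ) < (k : ℕ) then
        lamCoeff (u ++ a :: b :: v)
          (((sigmaF n u.length hL j : Fin (Dim n)) : ℕ) + 1) ((k : ℕ) + 1) else 0) * t k := by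
    have step1 : ∀ k : Fin (Dim n),
        (if (j : ℕ) < (k : ℕ) then
          lamCoeff (u ++ b :: a :: v) ((j : ℕ) + 1) ((k : ℕ) + 1) else 0) *
          t (sigmaF n u.length hL k) =
        (fun i : Fin (Dim n) =>
          (if (j : ℕ) < ((sigmaF n u.length hL i : Fin (Dim n)) : ℕ) then
            lamCoeff (u ++ a :: b :: v)
              (((sigmaF n u.length hL j : Fin (Dim n)) : ℕ) + 1) ((i : ℕ) + 1) else 0) * t i)
          (sigmaF n u.length hL k) := by
      intro k
      simp only []
      rw [sigmaF_invol]
      congr 1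
      rw [lamCoeffW_tau u v a b hab ((j : ℕ) + 1) ((k : ℕ) + 1) (by omega) (by omega),
        ← sigmaF_spec n u.length hL j, ← sigmaF_spec n u.length hL k]
    rw [Finset.sum_congr rfl (fun k _ => step1 k),
      Equiv.sum_comp (sigmaF n u.length hL)
        (fun i : Fin (Dim n) =>
          (if (j : ℕ) < ((sigmaF n u.length hL i : Fin (Dim n)) : ℕ) then
            lamCoeff (u ++ a :: b :: v)
              (((sigmaF n u.length hL j : Fin (Dim n)) : ℕ) + 1) ((i : ℕ) + 1) else 0) * t i)]
    apply Finset.sum_congr rfl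
    intro i _
    congr 1
    have hsi := sigmaF_spec n u.length hL i
    have hsj := sigmaF_spec n u.length hL j
    have h1 : ((j : ℕ) < ((sigmaF n u.length hL i : Fin (Dim n)) : ℕ)) ↔
        ((j : ℕ) + 1 < tau (u.length + 1) ((i : ℕ) + 1)) := by omega
    have h2 : (((sigmaF n u.length hL j : Fin (Dim n)) : ℕ) < (i : ℕ)) ↔
        (tau (u.length + 1) ((j : ℕ) + 1) < (i : ℕ) + 1) := by omega
    rw [if_congr h1 (by rw [hsj]) rfl, if_congr h2 (by rw [hsj]) rfl]
    exact lamTerm_nat u v a b hab ((j : ℕ) + 1) ((i : ℕ) + 1)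
  constructor
  · intro h
    have h' := h
    rw [hconst, hsum] at h'
    exact h'
  · intro h
    rw [hconst, hsum]
    exact h

lemma lamCone_tau (hab : a + 1 < b ∨ b + 1 < a) (n : ℕ) (hL : u.length + 1 < Dim n)
    (lam : ℕ → ℤ) :
    lamCone n (u ++ b :: a :: v) lam =
      (fun (t : Fin (Dim n) → ℝ) j => t (sigmaF n u.length hL j)) ''
        lamCone n (u ++ a :: b :: v) lam := by
  apply image_invol (fun t => funext fun j => by
    show t (sigmaF n u.length hL (sigmaF n u.length hL j)) = t j
    rw [sigmaF_invol])
  intro t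
  constructor
  · intro hΦ j
    have := hΦ (sigmaF n u.length hL j)
    rw [lamIneq_tau u v a b hab n hL lam _ t, sigmaF_invol] at this
    exact this
  · intro ht j
    rw [lamIneq_tau u v a b hab n hL lam j t]
    exact ht _

end TwoMoveStepAux6

lemma unimod_of_perm {m : ℕ} (σ : Equiv.Perm (Fin m)) (P : Set (Fin m → ℝ)) :
    UnimodEquiv P ((fun (t : Fin m → ℝ) j => t (σ j)) '' P) := by
  refine ⟨Equiv.Perm.permMatrix ℤ σ, 0, ?_, ?_⟩
  · rw [Matrix.det_permutation]
    exact (Equiv.Perm.sign σ).isUnit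
  · have hfun : (fun (x : Fin m → ℝ) i =>
        (∑ j, ((Equiv.Perm.permMatrix ℤ σ i j : ℤ) : ℝ) * x j) + (((0 : Fin m → ℤ) i : ℤ) : ℝ))
        = fun (t : Fin m → ℝ) j => t (σ j) := by
      funext x i
      have hentry : ∀ j, ((Equiv.Perm.permMatrix ℤ σ i j : ℤ) : ℝ) =
          if σ i = j then 1 else 0 := by
        intro j
        simp only [Equiv.Perm.permMatrix, PEquiv.toMatrix_apply, Equiv.toPEquiv_apply,
          Option.mem_def, Option.some.injEq]
        split_ifs <;> simp
      simp only [hentry, Pi.zero_apply, Int.cast_zero, add_zero, ite_mul, one_mul, zero_mul]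
      rw [Finset.sum_ite_eq]
      simp
    rw [hfun]

lemma unimod_refl {m : ℕ} (P : Set (Fin m → ℝ)) : UnimodEquiv P P := by
  refine ⟨1, 0, by simp, ?_⟩
  have hfun : (fun (x : Fin m → ℝ) i =>
      (∑ j, (((1 : Matrix (Fin m) (Fin m) ℤ) i j : ℤ) : ℝ) * x j) +
        (((0 : Fin m → ℤ) i : ℤ) : ℝ)) = id := by
    funext x i
    simp only [Matrix.one_apply, Pi.zero_apply, Int.cast_zero, add_zero]
    have : ∀ j, (((if i = j then (1 : ℤ) else 0) : ℤ) : ℝ) * x j =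
        if i = j then x j else 0 := by
      intro j; split_ifs <;> simp
    simp only [this, Finset.sum_ite_eq]
    simp
  rw [hfun, Set.image_id]

lemma unimod_trans {m : ℕ} {P Q R : Set (Fin m → ℝ)}
    (h1 : UnimodEquiv P Q) (h2 : UnimodEquiv Q R) : UnimodEquiv P R := by
  obtain ⟨M1, v1, hM1, rfl⟩ := h1
  obtain ⟨M2, v2, hM2, rfl⟩ := h2
  refine ⟨M2 * M1, M2.mulVec v1 + v2, ?_, ?_⟩
  · rw [Matrix.det_mul]; exact hM2.mul hM1
  · rw [← Set.image_comp]
    apply Set.image_congr'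
    intro x
    funext i
    simp only [Function.comp_apply]
    have e1 : ∀ j, ((M2 i j : ℤ) : ℝ) *
        ((∑ k, ((M1 j k : ℤ) : ℝ) * x k) + ((v1 j : ℤ) : ℝ)) =
        (∑ k, ((M2 i j : ℤ) : ℝ) * (((M1 j k : ℤ) : ℝ) * x k)) +
          ((M2 i j : ℤ) : ℝ) * ((v1 j : ℤ) : ℝ) := by
      intro j; rw [mul_add, Finset.mul_sum]
    rw [Finset.sum_congr rfl (fun j _ => e1 j), Finset.sum_add_distrib, Finset.sum_comm]
    have e2 : ∀ k, ∑ j, ((M2 i j : ℤ) : ℝ) * (((M1 j k : ℤ) : ℝ) * x k) =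
        (((M2 * M1) i k : ℤ) : ℝ) * x k := by
      intro k
      rw [Matrix.mul_apply]
      push_cast
      rw [Finset.sum_mul]
      exact Finset.sum_congr rfl (fun j _ => by ring)
    have e3 : ∑ j, ((M2 i j : ℤ) : ℝ) * ((v1 j : ℤ) : ℝ) =
        ((M2.mulVec v1 i : ℤ) : ℝ) := by
      simp only [Matrix.mulVec, dotProduct]
      push_cast
      rfl
    rw [Finset.sum_congr rfl (fun k _ => e2 k), e3]
    simp only [Pi.add_apply]
    push_cast
    ring

lemma twoMoveStep_len {w w' : List ℕ} (h : TwoMoveStep w w') : w'.length = w.length := by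
  obtain ⟨u, vv, a, b, -, rfl, rfl⟩ := h
  simp

lemma twoMoveStep_equiv (n : ℕ) {w w' : List ℕ} (hst : TwoMoveStep w w')
    (hlen : w.length = Dim n) :
    UnimodEquiv (stringCone n w) (stringCone n w') ∧
      ∀ lam : ℕ → ℤ, UnimodEquiv (stringPolytope n w lam) (stringPolytope n w' lam) := by
  obtain ⟨u, vv, a, b, hab, rfl, rfl⟩ := hst
  have hL : u.length + 1 < Dim n := by
    rw [← hlen, lenW u vv a b]; omega
  have hinv : Function.Involutive
      (fun (t : Fin (Dim n) → ℝ) j => t (sigmaF n u.length hL j)) := by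
    intro t
    funext j
    show t (sigmaF n u.length hL (sigmaF n u.length hL j)) = t j
    rw [sigmaF_invol]
  constructor
  · rw [stringCone_tau u vv a b hab n hL]
    exact unimod_of_perm _ _
  · intro lam
    unfold stringPolytope
    rw [stringCone_tau u vv a b hab n hL, lamCone_tau u vv a b hab n hL lam,
      ← Set.image_inter hinv.injective]
    exact unimod_of_perm _ _

/-- 2-moves give unimodular equivalences.
If `i, i' ∈ Σ_{n+1}` are 2-move equivalent then the string cones `C_i` and `C_{i'}`
are unimodularly equivalent, and for every dominant integral weight `λ` the string
polytopes `Δ_i(λ)` and `Δ_{i'}(λ)` are unimodularly equivalent. -/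
theorem statement2 (n : ℕ) (hn : 1 ≤ n) (i i' : List ℕ) (hi : IsReduced n i)
    (hi' : IsReduced n i') (h : TwoMoveEquiv i i') :
    UnimodEquiv (stringCone n i) (stringCone n i') ∧
    ∀ lam : ℕ → ℤ, Dominant n lam →
      UnimodEquiv (stringPolytope n i lam) (stringPolytope n i' lam) := by
  have hlen : i.length = Dim n := hi.1
  have h' : Relation.ReflTransGen TwoMoveStep i i' := h
  clear hi hi' h hn
  have main : (UnimodEquiv (stringCone n i) (stringCone n i') ∧
      ∀ lam : ℕ → ℤ, UnimodEquiv (stringPolytope n i lam) (stringPolytope n i' lam)) ∧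
      i'.length = Dim n := by
    induction h' with
    | refl => exact ⟨⟨unimod_refl _, fun lam => unimod_refl _⟩, hlen⟩
    | @tail m c hm hstep ih =>
      obtain ⟨⟨hc, hp⟩, hl⟩ := ih
      have hres := twoMoveStep_equiv n hstep hl
      exact ⟨⟨unimod_trans hc hres.1, fun lam => unimod_trans (hp lam) (hres.2 lam)⟩,
        (twoMoveStep_len hstep).trans hl⟩
  exact ⟨main.1.1, fun lam _ => main.1.2 lam⟩

end StringPolytope
end
end
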